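/- arXiv:2211.16621 — 3 statements merged into one kernel-verified Lean document; each statement's English description precedes it below -/
import Mathlib

section
/- Let T = ⋂ᵢ₌₁ⁿ (xᵢ + C) be a proper intersection of n ≥ 2 translates of a smooth strictly convex domain C in ℝ². Then T has exactly n singular boundary points. -/
open Pointwise
open scoped RealInnerProductSpace

abbrev Plane := EuclideanSpace ℝ (Fin 2)

/-- A convex domain: compact, convex, with nonempty interior. -/
def IsConvexDomain (C : Set Plane) : Prop :=
  IsCompact C ∧ Convex ℝ C ∧ (interior C).Nonempty

/-- A strictly convex domain: a convex domain where the open segment between any two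
distinct boundary points lies in the interior. -/
def IsStrictConvexDomain (C : Set Plane) : Prop :=
  IsConvexDomain C ∧
    ∀ x ∈ frontier C, ∀ y ∈ frontier C, x ≠ y → openSegment ℝ x y ⊆ interior C

/-- `u` is an outer unit normal of a supporting line of `C` at `x`. -/
def IsOuterNormalAt (C : Set Plane) (x u : Plane) : Prop :=
  ‖u‖ = 1 ∧ ∀ y ∈ C, (inner ℝ u y : ℝ) ≤ inner ℝ u x

/-- A singular boundary point: a boundary point admitting two distinct supporting lines
(equivalently, two distinct outer unit normals). -/
def IsSingularPt (C : Set Plane) (x : Plane) : Prop :=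
  x ∈ frontier C ∧ ∃ u v : Plane, u ≠ v ∧ IsOuterNormalAt C x u ∧ IsOuterNormalAt C x v

/-- Smooth: every boundary point has a unique outer unit normal (unique supporting line). -/
def IsSmoothDomain (C : Set Plane) : Prop :=
  ∀ x ∈ frontier C, ∃! u : Plane, IsOuterNormalAt C x u

namespace Stmt12

noncomputable def Jv (v : Plane) : Plane := (WithLp.equiv 2 _).symm ![-(v 1), v 0]

lemma Jv_apply0 (v : Plane) : Jv v 0 = -(v 1) := rfl
lemma Jv_apply1 (v : Plane) : Jv v 1 = v 0 := rfl

lemma inner_expand (u v : Plane) : ⟪u, v⟫ = u 0 * v 0 + u 1 * v 1 := by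
  rw [PiLp.inner_apply]; simp [Fin.sum_univ_two]; ring

lemma inner_Jv_self (v : Plane) : ⟪Jv v, v⟫ = 0 := by
  rw [inner_expand, Jv_apply0, Jv_apply1]; ring

lemma smul_apply' (c : ℝ) (v : Plane) (i : Fin 2) : (c • v) i = c * v i := rfl
lemma add_apply' (u v : Plane) (i : Fin 2) : (u + v) i = u i + v i := rfl
lemma neg_apply' (v : Plane) (i : Fin 2) : (-v) i = -(v i) := rfl
lemma sub_apply' (u v : Plane) (i : Fin 2) : (u - v) i = u i - v i := rfl

lemma plane_ext {u v : Plane} (h0 : u 0 = v 0) (h1 : u 1 = v 1) : u = v := by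
  apply PiLp.ext; intro i
  fin_cases i <;> assumption

lemma norm_sq_expand (v : Plane) : ‖v‖ ^ 2 = v 0 * v 0 + v 1 * v 1 := by
  rw [← real_inner_self_eq_norm_sq, inner_expand]

lemma decomposition (v z : Plane) : ⟪v, z⟫ • v + ⟪Jv v, z⟫ • Jv v = (‖v‖ ^ 2) • z := by
  apply plane_ext <;>
  · simp only [add_apply', smul_apply', Jv_apply0, Jv_apply1, inner_expand, norm_sq_expand]
    ring

lemma eq_zero_of_perp2 {v z : Plane} (hv : v ≠ 0) (h1 : ⟪v, z⟫ = 0) (h2 : ⟪Jv v, z⟫ = 0) :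
    z = 0 := by
  have hd := decomposition v z
  rw [h1, h2, zero_smul, zero_smul, add_zero] at hd
  have hn : ‖v‖ ^ 2 ≠ 0 := pow_ne_zero _ (norm_ne_zero_iff.mpr hv)
  have := hd.symm
  rw [smul_eq_zero] at this
  tauto

lemma mem_span_of_perp {v a : Plane} (hv : v ≠ 0) (h : ⟪Jv v, a⟫ = 0) :
    ∃ γ : ℝ, a = γ • v := by
  have hd := decomposition v a
  rw [h, zero_smul, add_zero] at hd
  have hn : ‖v‖ ^ 2 ≠ 0 := pow_ne_zero _ (norm_ne_zero_iff.mpr hv)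
  refine ⟨⟪v, a⟫ / ‖v‖ ^ 2, ?_⟩
  rw [div_eq_inv_mul, ← smul_smul, hd, inv_smul_smul₀ hn]

lemma Jv_Jv (v : Plane) : Jv (Jv v) = -v := by
  apply plane_ext <;> simp [Jv_apply0, Jv_apply1, neg_apply']

lemma inner_self_Jv (v : Plane) : ⟪v, Jv v⟫ = 0 := by
  rw [inner_expand, Jv_apply0, Jv_apply1]; ring

lemma norm_Jv (v : Plane) : ‖Jv v‖ = ‖v‖ := by
  have h : ‖Jv v‖ ^ 2 = ‖v‖ ^ 2 := by
    rw [norm_sq_expand, norm_sq_expand, Jv_apply0, Jv_apply1]; ring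
  have := congrArg Real.sqrt h
  rwa [Real.sqrt_sq (norm_nonneg _), Real.sqrt_sq (norm_nonneg _)] at this

lemma norm_eq_one_of_sq {a : Plane} (h : ‖a‖ ^ 2 = 1) : ‖a‖ = 1 := by
  have := congrArg Real.sqrt h
  rwa [Real.sqrt_sq (norm_nonneg _), Real.sqrt_one] at this

lemma span_units {w w' : Plane} (hw : ‖w‖ = 1) (hw' : ‖w'‖ = 1) (h : ⟪Jv w, w'⟫ = 0) :
    w' = w ∨ w' = -w := by
  have hw0 : w ≠ 0 := by intro h0; rw [h0, norm_zero] at hw; norm_num at hw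
  obtain ⟨γ, hγ⟩ := mem_span_of_perp hw0 h
  have : |γ| = 1 := by
    have := congrArg norm hγ
    rw [norm_smul, hw, hw', Real.norm_eq_abs, mul_one] at this
    exact this.symm
  rcases abs_eq (by norm_num : (0:ℝ) ≤ 1) |>.mp this with h1 | h1
  · left; rw [hγ, h1, one_smul]
  · right; rw [hγ, h1, neg_smul, one_smul]

lemma unit_perp {d w w' : Plane} (hd : d ≠ 0) (hw : ‖w‖ = 1) (hw' : ‖w'‖ = 1)
    (h : ⟪w, d⟫ = 0) (h' : ⟪w', d⟫ = 0) : w' = w ∨ w' = -w := by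
  -- both are multiples of Jv d
  have hJd : Jv d ≠ 0 := by
    intro h0
    have := congrArg norm h0
    rw [norm_Jv, norm_zero] at this
    exact hd (norm_eq_zero.mp this)
  have key : ∀ z : Plane, ⟪z, d⟫ = 0 → ⟪Jv (Jv d), z⟫ = 0 := by
    intro z hz
    rw [Jv_Jv, inner_neg_left, real_inner_comm, hz, neg_zero]
  obtain ⟨γ, hγ⟩ := mem_span_of_perp hJd (key w h)
  obtain ⟨γ', hγ'⟩ := mem_span_of_perp hJd (key w' h')
  have hn : ‖Jv d‖ ≠ 0 := norm_ne_zero_iff.mpr hJd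
  have h1 : |γ| * ‖Jv d‖ = 1 := by
    have := congrArg norm hγ; rw [norm_smul, hw, Real.norm_eq_abs] at this; linarith [this.symm]
  have h2 : |γ'| * ‖Jv d‖ = 1 := by
    have := congrArg norm hγ'; rw [norm_smul, hw', Real.norm_eq_abs] at this; linarith [this.symm]
  have h3 : |γ| * ‖Jv d‖ = |γ'| * ‖Jv d‖ := by rw [h1, h2]
  have habs : |γ| = |γ'| := mul_right_cancel₀ hn h3
  rcases abs_eq_abs.mp habs.symm with he | he
  · left; rw [hγ', he, ← hγ]
  · right; rw [hγ', he, neg_smul, ← hγ]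

lemma coords {w w' z : Plane} (hw : w ≠ 0) (h : ⟪Jv w, w'⟫ ≠ 0) :
    ∃ α β : ℝ, z = α • w + β • w' := by
  set β := ⟪Jv w, z⟫ / ⟪Jv w, w'⟫ with hβ
  have hkey : β * ⟪Jv w, w'⟫ = ⟪Jv w, z⟫ := by
    rw [hβ, div_mul_cancel₀ _ h]
  have hperp : ⟪Jv w, z - β • w'⟫ = 0 := by
    rw [inner_sub_right, real_inner_smul_right, hkey, sub_self]
  obtain ⟨γ, hγ⟩ := mem_span_of_perp hw hperp
  exact ⟨γ, β, by rw [← hγ]; abel⟩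

lemma cone_side {w a b : Plane} (hw : w ≠ 0) (hsame : 0 < ⟪Jv w, a⟫ * ⟪Jv w, b⟫) :
    (∃ α β : ℝ, 0 ≤ α ∧ 0 < β ∧ b = α • w + β • a) ∨
    (∃ α β : ℝ, 0 ≤ α ∧ 0 < β ∧ a = α • w + β • b) := by
  have ha : ⟪Jv w, a⟫ ≠ 0 := by
    intro h0; rw [h0, zero_mul] at hsame; exact lt_irrefl _ hsame
  set β := ⟪Jv w, b⟫ / ⟪Jv w, a⟫ with hβdef
  have hβ : 0 < β := by
    rw [hβdef, div_pos_iff]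
    rcases mul_pos_iff.mp hsame with ⟨h1, h2⟩ | ⟨h1, h2⟩
    · left; exact ⟨h2, h1⟩
    · right; exact ⟨h2, h1⟩
  have hkey : β * ⟪Jv w, a⟫ = ⟪Jv w, b⟫ := by
    rw [hβdef, div_mul_cancel₀ _ ha]
  have hperp : ⟪Jv w, b - β • a⟫ = 0 := by
    rw [inner_sub_right, real_inner_smul_right, hkey, sub_self]
  obtain ⟨γ, hγ⟩ := mem_span_of_perp hw hperp
  rcases le_or_gt 0 γ with hγ0 | hγ0
  · left
    exact ⟨γ, β, hγ0, hβ, by rw [← hγ]; abel⟩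
  · right
    refine ⟨-γ / β, 1 / β, le_of_lt (div_pos (neg_pos.mpr hγ0) hβ), div_pos one_pos hβ, ?_⟩
    have hb : β • a = b - γ • w := by rw [← hγ]; abel
    have ha2 : a = β⁻¹ • (b - γ • w) := by
      rw [← hb, inv_smul_smul₀ (ne_of_gt hβ)]
    rw [ha2]
    match_scalars <;> field_simp


noncomputable def rot (θ : ℝ) (v : Plane) : Plane := Real.cos θ • v + Real.sin θ • Jv v

lemma rot_zero (v : Plane) : rot 0 v = v := by
  simp [rot]

lemma rot_pi (v : Plane) : rot Real.pi v = -v := by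
  simp [rot]

lemma inner_Jv_Jv (u v : Plane) : ⟪Jv u, Jv v⟫ = ⟪u, v⟫ := by
  rw [inner_expand, inner_expand, Jv_apply0, Jv_apply1, Jv_apply0, Jv_apply1]; ring

lemma norm_rot {v : Plane} (hv : ‖v‖ = 1) (θ : ℝ) : ‖rot θ v‖ = 1 := by
  apply norm_eq_one_of_sq
  rw [rot, norm_add_sq_real, norm_smul, norm_smul, real_inner_smul_left,
    real_inner_smul_right, inner_self_Jv, norm_Jv, hv]
  simp only [mul_zero, mul_one, Real.norm_eq_abs]
  have h1 : |Real.cos θ| ^ 2 = Real.cos θ ^ 2 := sq_abs _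
  have h2 : |Real.sin θ| ^ 2 = Real.sin θ ^ 2 := sq_abs _
  rw [h1, h2]
  have := Real.sin_sq_add_cos_sq θ
  ring_nf
  linarith

lemma continuous_rot (v : Plane) : Continuous (fun θ => rot θ v) := by
  unfold rot
  exact (Real.continuous_cos.smul continuous_const).add
    (Real.continuous_sin.smul continuous_const)

lemma rot_inj {v : Plane} (hv : ‖v‖ = 1) {a b : ℝ} (h : rot a v = rot b v) :
    Real.cos a = Real.cos b ∧ Real.sin a = Real.sin b := by
  have hv2 : ⟪v, v⟫ = (1:ℝ) := by
    rw [real_inner_self_eq_norm_sq, hv]; norm_num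
  have hJ2 : ⟪Jv v, Jv v⟫ = (1:ℝ) := inner_Jv_Jv v v ▸ hv2
  constructor
  · have h1 := congrArg (fun w => ⟪w, v⟫) h
    simp only [rot, inner_add_left, real_inner_smul_left] at h1
    rw [hv2, inner_Jv_self] at h1
    simpa using h1
  · have h1 := congrArg (fun w => ⟪w, Jv v⟫) h
    simp only [rot, inner_add_left, real_inner_smul_left] at h1
    rw [hJ2, inner_self_Jv] at h1
    simpa using h1



section Body
variable {K : Set Plane}

lemma exists_max (hKc : IsCompact K) (hne : K.Nonempty) (u : Plane) :
    ∃ p ∈ K, ∀ y ∈ K, ⟪u, y⟫ ≤ ⟪u, p⟫ := by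
  have hcont : Continuous fun y : Plane => ⟪u, y⟫ := Continuous.inner continuous_const continuous_id
  obtain ⟨p, hp, h⟩ := hKc.exists_isMaxOn hne hcont.continuousOn
  exact ⟨p, hp, fun y hy => h hy⟩

lemma interior_lt {u p q : Plane} (hu : u ≠ 0) (hp : p ∈ interior K)
    (hq : ∀ y ∈ K, ⟪u, y⟫ ≤ ⟪u, q⟫) : ⟪u, p⟫ < ⟪u, q⟫ := by
  obtain ⟨ε, hε, hball⟩ := Metric.isOpen_iff.mp isOpen_interior p hp
  have hun : (0:ℝ) < ‖u‖ := norm_pos_iff.mpr hu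
  set t : ℝ := ε / (2 * ‖u‖) with ht
  have htpos : 0 < t := by positivity
  have hy : p + t • u ∈ K := by
    apply interior_subset
    apply hball
    rw [Metric.mem_ball, dist_eq_norm]
    have : p + t • u - p = t • u := by abel
    rw [this, norm_smul, Real.norm_eq_abs, abs_of_pos htpos, ht]
    rw [div_mul_eq_mul_div, mul_comm]
    rw [mul_div_assoc]
    calc ‖u‖ * (ε / (2 * ‖u‖)) = ε / 2 := by field_simp
    _ < ε := by linarith
  have := hq _ hy
  rw [inner_add_right, real_inner_smul_right, real_inner_self_eq_norm_sq] at this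
  have hpos : 0 < t * ‖u‖ ^ 2 := by positivity
  linarith

lemma max_mem_frontier (hKcl : IsClosed K) {u p : Plane} (hu : u ≠ 0) (hp : p ∈ K)
    (hmax : ∀ y ∈ K, ⟪u, y⟫ ≤ ⟪u, p⟫) : p ∈ frontier K := by
  rw [frontier, hKcl.closure_eq]
  refine ⟨hp, fun hint => ?_⟩
  exact lt_irrefl _ (interior_lt hu hint hmax)

lemma le_on_closure {f : Plane →L[ℝ] ℝ} {c : ℝ} (hKv : Convex ℝ K) {z : Plane}
    (hz : z ∈ interior K) (h : ∀ a ∈ interior K, f a < c) {y : Plane} (hy : y ∈ K) :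
    f y ≤ c := by
  have hseq : ∀ m : ℕ, f (y + (1 / (m + 1) : ℝ) • (z - y)) < c := by
    intro m
    apply h
    apply hKv.add_smul_sub_mem_interior hy hz
    constructor
    · positivity
    · rw [div_le_one (by positivity)]
      linarith [Nat.cast_nonneg (α := ℝ) m]
  have htend : Filter.Tendsto (fun m : ℕ => f (y + (1 / (m + 1) : ℝ) • (z - y)))
      Filter.atTop (nhds (f y)) := by
    have h1 : Filter.Tendsto (fun m : ℕ => (1 / (m + 1) : ℝ)) Filter.atTop (nhds 0) :=
      tendsto_one_div_add_atTop_nhds_zero_nat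
    have h2 : Filter.Tendsto (fun m : ℕ => y + (1 / (m + 1) : ℝ) • (z - y))
        Filter.atTop (nhds y) := by
      have := (h1.smul_const (z - y)).const_add y
      simpa using this
    exact (f.continuous.tendsto y).comp h2
  exact le_of_tendsto htend (Filter.Eventually.of_forall fun m => (hseq m).le)

lemma exists_unit_normal (hKcl : IsClosed K) (hKv : Convex ℝ K)
    (hKi : (interior K).Nonempty) {p : Plane} (hp : p ∈ frontier K) :
    ∃ u : Plane, ‖u‖ = 1 ∧ ∀ y ∈ K, ⟪u, y⟫ ≤ ⟪u, p⟫ := by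
  obtain ⟨c, hc⟩ := hKi
  have hpi : p ∉ interior K := hp.2
  obtain ⟨f, hf⟩ := geometric_hahn_banach_open_point hKv.interior isOpen_interior hpi
  set u₀ : Plane := (InnerProductSpace.toDual ℝ Plane).symm f with hu₀
  have hinner : ∀ y : Plane, ⟪u₀, y⟫ = f y := fun y => by
    rw [hu₀]; simp
  have hu₀ne : u₀ ≠ 0 := by
    intro h0
    have := hf c hc
    have hc0 : f c = ⟪u₀, c⟫ := (hinner c).symm
    have hp0 : f p = ⟪u₀, p⟫ := (hinner p).symm
    rw [hc0, hp0, h0] at this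
    simp at this
  have hn : (0:ℝ) < ‖u₀‖ := norm_pos_iff.mpr hu₀ne
  refine ⟨‖u₀‖⁻¹ • u₀, ?_, ?_⟩
  · rw [norm_smul, Real.norm_eq_abs, abs_of_pos (inv_pos.mpr hn)]
    field_simp
  · intro y hy
    rw [real_inner_smul_left, real_inner_smul_left, hinner, hinner]
    have hfyp : f y ≤ f p := le_on_closure hKv hc (fun a ha => hf a ha) hy
    exact mul_le_mul_of_nonneg_left hfyp (inv_pos.mpr hn).le

lemma max_unique (hKc : IsCompact K) (hKv : Convex ℝ K)
    (hS : ∀ p ∈ frontier K, ∀ q ∈ frontier K, p ≠ q → openSegment ℝ p q ⊆ interior K)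
    {u p q : Plane} (hu : u ≠ 0) (hp : p ∈ K) (hq : q ∈ K)
    (hpm : ∀ y ∈ K, ⟪u, y⟫ ≤ ⟪u, p⟫) (hqm : ∀ y ∈ K, ⟪u, y⟫ ≤ ⟪u, q⟫) : p = q := by
  by_contra hne
  have hpf := max_mem_frontier hKc.isClosed hu hp hpm
  have hqf := max_mem_frontier hKc.isClosed hu hq hqm
  have hmid : (1/2 : ℝ) • p + (1/2 : ℝ) • q ∈ interior K := by
    apply hS p hpf q hqf hne
    exact ⟨1/2, 1/2, by norm_num, by norm_num, by norm_num, rfl⟩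
  have hlt := interior_lt hu hmid hpm
  have h1 : ⟪u, p⟫ = ⟪u, q⟫ := le_antisymm (hqm p hp) (hpm q hq)
  rw [inner_add_right, real_inner_smul_right, real_inner_smul_right, ← h1] at hlt
  linarith

end Body
end Stmt12


open Set

namespace Stmt12

section Main
variable {n : ℕ}

def MinAt (x : Fin n → Plane) (i : Fin n) (w : Plane) : Prop := ∀ m, ⟪w, x i⟫ ≤ ⟪w, x m⟫

def IsWall (x : Fin n → Plane) (w : Plane) : Prop :=
  ‖w‖ = 1 ∧ ∃ i j : Fin n, i ≠ j ∧ MinAt x i w ∧ MinAt x j w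

variable {C : Set Plane} {x : Fin n → Plane}

lemma mem_vadd_iff {a y : Plane} {s : Set Plane} : y ∈ a +ᵥ s ↔ y - a ∈ s := by
  rw [Set.mem_vadd_set_iff_neg_vadd_mem, vadd_eq_add, neg_add_eq_sub]

lemma frontier_vadd' (a : Plane) (s : Set Plane) : frontier (a +ᵥ s) = a +ᵥ frontier s := by
  have h := (Homeomorph.addLeft a).image_frontier s
  have e : ∀ t : Set Plane, (Homeomorph.addLeft a) '' t = a +ᵥ t := fun t => by
    ext y
    simp only [Set.mem_vadd_set, Homeomorph.addLeft, Equiv.addLeft, Homeomorph.homeomorph_mk_coe,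
      Equiv.coe_fn_mk, Set.mem_image, vadd_eq_add]
    constructor
    · rintro ⟨z, hz, rfl⟩; exact ⟨z, hz, rfl⟩
    · rintro ⟨z, hz, rfl⟩; exact ⟨z, hz, rfl⟩
  rw [e, e] at h
  exact h.symm


-- ### Basic facts about C
lemma hCcpt (hC : IsStrictConvexDomain C) : IsCompact C := hC.1.1
lemma hCconv (hC : IsStrictConvexDomain C) : Convex ℝ C := hC.1.2.1
lemma hCint (hC : IsStrictConvexDomain C) : (interior C).Nonempty := hC.1.2.2

-- ### Translates
lemma K_compact (hC : IsStrictConvexDomain C) (i : Fin n) : IsCompact (x i +ᵥ C) := by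
  rw [← Set.image_vadd]
  exact (hCcpt hC).image (continuous_const_vadd _)

lemma K_convex (hC : IsStrictConvexDomain C) (i : Fin n) : Convex ℝ (x i +ᵥ C) :=
  (hCconv hC).vadd _

lemma K_interior (i : Fin n) : interior (x i +ᵥ C) = x i +ᵥ interior C := interior_vadd ..

lemma K_frontier (i : Fin n) : frontier (x i +ᵥ C) = x i +ᵥ frontier C := frontier_vadd' ..

lemma K_int_nonempty (hC : IsStrictConvexDomain C) (i : Fin n) :
    (interior (x i +ᵥ C)).Nonempty := by
  rw [K_interior]
  obtain ⟨c, hc⟩ := hCint hC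
  exact ⟨x i + c, mem_vadd_iff.mpr (by simpa using hc)⟩

lemma K_strict (hC : IsStrictConvexDomain C) (i : Fin n) :
    ∀ p ∈ frontier (x i +ᵥ C), ∀ q ∈ frontier (x i +ᵥ C), p ≠ q →
      openSegment ℝ p q ⊆ interior (x i +ᵥ C) := by
  intro p hp q hq hpq z hz
  rw [K_frontier] at hp hq
  rw [K_interior]
  have hp' : p - x i ∈ frontier C := mem_vadd_iff.mp hp
  have hq' : q - x i ∈ frontier C := mem_vadd_iff.mp hq
  have hne : p - x i ≠ q - x i := fun h => hpq (by
    have := congrArg (· + x i) h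
    simpa using this)
  apply mem_vadd_iff.mpr
  apply hC.2 _ hp' _ hq' hne
  obtain ⟨a, b, ha, hb, hab, rfl⟩ := hz
  refine ⟨a, b, ha, hb, hab, ?_⟩
  have hb' : b = 1 - a := by linarith
  subst hb'
  apply plane_ext <;>
  · simp only [add_apply', sub_apply', smul_apply']
    ring

lemma normal_vadd_iff {a p u : Plane} :
    IsOuterNormalAt (a +ᵥ C) p u ↔ IsOuterNormalAt C (p - a) u := by
  unfold IsOuterNormalAt
  refine and_congr Iff.rfl ⟨fun h y hy => ?_, fun h y hy => ?_⟩
  · have := h (y + a) (mem_vadd_iff.mpr (by simpa using hy))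
    rw [inner_add_right] at this
    have h2 : ⟪u, p - a⟫ = ⟪u, p⟫ - ⟪u, a⟫ := inner_sub_right ..
    rw [h2]
    linarith
  · have := h (y - a) (mem_vadd_iff.mp hy)
    rw [inner_sub_right] at this
    have h2 : ⟪u, p - a⟫ = ⟪u, p⟫ - ⟪u, a⟫ := inner_sub_right ..
    rw [h2] at this
    linarith

lemma K_normal_unique (hC : IsStrictConvexDomain C) (hCs : IsSmoothDomain C) (i : Fin n)
    {p u v : Plane} (hp : p ∈ frontier (x i +ᵥ C))
    (hu : IsOuterNormalAt (x i +ᵥ C) p u) (hv : IsOuterNormalAt (x i +ᵥ C) p v) : u = v := by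
  rw [K_frontier] at hp
  have hp' : p - x i ∈ frontier C := mem_vadd_iff.mp hp
  obtain ⟨u₀, -, huniq⟩ := hCs _ hp'
  rw [huniq u (normal_vadd_iff.mp hu), huniq v (normal_vadd_iff.mp hv)]

lemma K_normal_exists (hC : IsStrictConvexDomain C) (i : Fin n)
    {p : Plane} (hp : p ∈ frontier (x i +ᵥ C)) : ∃ u, IsOuterNormalAt (x i +ᵥ C) p u := by
  obtain ⟨u, hu1, hu2⟩ := exists_unit_normal (K_compact hC i).isClosed (K_convex hC i)
    (K_int_nonempty hC i) hp
  exact ⟨u, hu1, hu2⟩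

-- ### The intersection TT
lemma TT_closed (hC : IsStrictConvexDomain C) : IsClosed (⋂ i, x i +ᵥ C) :=
  isClosed_iInter fun i => (K_compact hC i).isClosed

lemma TT_compact (hC : IsStrictConvexDomain C) (hn : 2 ≤ n) : IsCompact (⋂ i, x i +ᵥ C) := by
  have i0 : Fin n := ⟨0, by omega⟩
  exact (K_compact hC i0).of_isClosed_subset (TT_closed hC) (Set.iInter_subset _ i0)

lemma TT_convex (hC : IsStrictConvexDomain C) : Convex ℝ (⋂ i, x i +ᵥ C) :=
  convex_iInter fun i => K_convex hC i

lemma TT_interior (hC : IsStrictConvexDomain C) :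
    interior (⋂ i, x i +ᵥ C) = ⋂ i, interior (x i +ᵥ C) := interior_iInter_of_finite _

lemma TT_sub (i : Fin n) : (⋂ i, x i +ᵥ C) ⊆ x i +ᵥ C := Set.iInter_subset _ i

lemma TT_frontier_sub (hC : IsStrictConvexDomain C) :
    frontier (⋂ i, x i +ᵥ C) ⊆ (⋂ i, x i +ᵥ C) := by
  rw [frontier, (TT_closed hC).closure_eq]
  exact Set.diff_subset

lemma TT_frontier_iff (hC : IsStrictConvexDomain C) {p : Plane} (hp : p ∈ ⋂ i, x i +ᵥ C) :
    p ∈ frontier (⋂ i, x i +ᵥ C) ↔ ∃ i, p ∈ frontier (x i +ᵥ C) := by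
  constructor
  · intro hf
    have hni : p ∉ interior (⋂ i, x i +ᵥ C) := hf.2
    rw [TT_interior hC, Set.mem_iInter] at hni
    push_neg at hni
    obtain ⟨i, hi⟩ := hni
    refine ⟨i, ?_⟩
    rw [frontier, (K_compact hC i).isClosed.closure_eq]
    exact ⟨TT_sub i hp, hi⟩
  · rintro ⟨i, hi⟩
    constructor
    · exact subset_closure hp
    · intro hint
      rw [TT_interior hC] at hint
      exact hi.2 (Set.mem_iInter.mp hint i)

lemma TT_strict (hC : IsStrictConvexDomain C) :
    ∀ p ∈ frontier (⋂ i, x i +ᵥ C), ∀ q ∈ frontier (⋂ i, x i +ᵥ C), p ≠ q →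
      openSegment ℝ p q ⊆ interior (⋂ i, x i +ᵥ C) := by
  intro p hp q hq hpq z hz
  rw [TT_interior hC]
  rw [Set.mem_iInter]
  intro i
  have hpT : p ∈ ⋂ i, x i +ᵥ C := TT_frontier_sub hC hp
  have hqT : q ∈ ⋂ i, x i +ᵥ C := TT_frontier_sub hC hq
  have hpK : p ∈ x i +ᵥ C := TT_sub i hpT
  have hqK : q ∈ x i +ᵥ C := TT_sub i hqT
  by_cases hpint : p ∈ interior (x i +ᵥ C)
  · exact (K_convex hC i).openSegment_interior_self_subset_interior hpint hqK hz
  · by_cases hqint : q ∈ interior (x i +ᵥ C)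
    · exact (K_convex hC i).openSegment_self_interior_subset_interior hpK hqint hz
    · have hpf : p ∈ frontier (x i +ᵥ C) := by
        rw [frontier, (K_compact hC i).isClosed.closure_eq]; exact ⟨hpK, hpint⟩
      have hqf : q ∈ frontier (x i +ᵥ C) := by
        rw [frontier, (K_compact hC i).isClosed.closure_eq]; exact ⟨hqK, hqint⟩
      exact K_strict hC i p hpf q hqf hpq hz

/-- Uniqueness of the point supported by a given unit normal. -/
lemma point_unique (hC : IsStrictConvexDomain C) (hn : 2 ≤ n) {p q u : Plane}
    (hp : p ∈ ⋂ i, x i +ᵥ C) (hq : q ∈ ⋂ i, x i +ᵥ C) (hu : u ≠ 0)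
    (h1 : ∀ y ∈ ⋂ i, x i +ᵥ C, ⟪u, y⟫ ≤ ⟪u, p⟫)
    (h2 : ∀ y ∈ ⋂ i, x i +ᵥ C, ⟪u, y⟫ ≤ ⟪u, q⟫) : p = q :=
  max_unique (TT_compact hC hn) (TT_convex hC) (TT_strict hC) hu hp hq h1 h2

/-- no two antipodal normals at points of a body with interior -/
lemma no_antipodal (hC : IsStrictConvexDomain C)
    (hTint : (interior (⋂ i, x i +ᵥ C)).Nonempty) {p u : Plane}
    (hu : IsOuterNormalAt (⋂ i, x i +ᵥ C) p u) (hv : IsOuterNormalAt (⋂ i, x i +ᵥ C) p (-u)) :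
    False := by
  obtain ⟨c, hc⟩ := hTint
  have hu0 : u ≠ 0 := by
    intro h
    have := hu.1
    rw [h, norm_zero] at this
    norm_num at this
  have h1 : ⟪u, c⟫ < ⟪u, p⟫ := interior_lt hu0 hc hu.2
  have h2 : ⟪-u, c⟫ < ⟪-u, p⟫ := interior_lt (neg_ne_zero.mpr hu0) hc hv.2
  rw [inner_neg_left, inner_neg_left] at h2
  linarith

-- ### reducedness consequences
lemma x_inj (hred : ∀ j : Fin n, (⋂ i, x i +ᵥ C) ⊂ ⋂ i ∈ {i : Fin n | i ≠ j}, x i +ᵥ C) :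
    Function.Injective x := by
  intro i j hij
  by_contra hne
  have hsub : (⋂ m ∈ {m : Fin n | m ≠ i}, x m +ᵥ C) ⊆ ⋂ m, x m +ᵥ C := by
    intro y hy
    rw [Set.mem_iInter₂] at hy
    rw [Set.mem_iInter]
    intro m
    by_cases hmi : m = i
    · subst hmi
      have := hy j (by simpa using fun h => hne h.symm)
      rwa [← hij] at this
    · exact hy m hmi
  exact (hred i).2 hsub

-- ### normals of K i vs TT
lemma normal_TT_of_K {i : Fin n} {p u : Plane} (hp : p ∈ ⋂ i, x i +ᵥ C)
    (hu : IsOuterNormalAt (x i +ᵥ C) p u) : IsOuterNormalAt (⋂ i, x i +ᵥ C) p u :=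
  ⟨hu.1, fun y hy => hu.2 y (TT_sub i hy)⟩

/-- a normal of K i at p ∈ TT minimizes i among the translates. -/
lemma minAt_of_K_normal {i : Fin n} {p u : Plane} (hp : p ∈ ⋂ i, x i +ᵥ C)
    (hu : IsOuterNormalAt (x i +ᵥ C) p u) : MinAt x i u := by
  intro m
  have hpm : p - x m ∈ C := mem_vadd_iff.mp (Set.mem_iInter.mp hp m)
  have := hu.2 ((p - x m) + x i) (mem_vadd_iff.mpr (by simpa using hpm))
  rw [inner_add_right, inner_sub_right] at this
  linarith

lemma distinct_normals (hC : IsStrictConvexDomain C)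
    (hxne : x ≠ x)
    : True := trivial

-- ### singular points: characterization
lemma singular_of_two (hC : IsStrictConvexDomain C) (hCs : IsSmoothDomain C)
    (hxinj : Function.Injective x) {p : Plane} (hp : p ∈ ⋂ i, x i +ᵥ C)
    {i j : Fin n} (hij : i ≠ j) (hpi : p ∈ frontier (x i +ᵥ C))
    (hpj : p ∈ frontier (x j +ᵥ C)) : IsSingularPt (⋂ i, x i +ᵥ C) p := by
  obtain ⟨u, hu⟩ := K_normal_exists hC i hpi
  obtain ⟨v, hv⟩ := K_normal_exists hC j hpj
  have hu0 : u ≠ 0 := by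
    intro h; have := hu.1; rw [h, norm_zero] at this; norm_num at this
  have huv : u ≠ v := by
    intro h
    subst h
    have hCu := normal_vadd_iff.mp hu
    have hCv := normal_vadd_iff.mp hv
    have hpiC : p - x i ∈ C := mem_vadd_iff.mp (Set.mem_iInter.mp hp i)
    have hpjC : p - x j ∈ C := mem_vadd_iff.mp (Set.mem_iInter.mp hp j)
    have heq : p - x i = p - x j :=
      max_unique (hCcpt hC) (hCconv hC) hC.2 hu0 hpiC hpjC hCu.2 hCv.2
    have : x i = x j := by
      have h2 := congrArg (fun z => p - z) heq
      simpa using h2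
    exact hij (hxinj this)
  exact ⟨(TT_frontier_iff hC hp).mpr ⟨i, hpi⟩, u, v, huv,
    normal_TT_of_K hp hu, normal_TT_of_K hp hv⟩

lemma normal_of_singleton (hC : IsStrictConvexDomain C) {i : Fin n} {p u : Plane}
    (hp : p ∈ ⋂ i, x i +ᵥ C) (hpi : p ∈ frontier (x i +ᵥ C))
    (hint : ∀ j, j ≠ i → p ∈ interior (x j +ᵥ C))
    (hu : IsOuterNormalAt (⋂ i, x i +ᵥ C) p u) : IsOuterNormalAt (x i +ᵥ C) p u := by
  refine ⟨hu.1, fun y hy => ?_⟩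
  have hU : IsOpen (⋂ j, ⋂ (_ : j ≠ i), interior (x j +ᵥ C)) :=
    isOpen_iInter_of_finite fun j => isOpen_iInter_of_finite fun _ => isOpen_interior
  have hpU : p ∈ ⋂ j, ⋂ (_ : j ≠ i), interior (x j +ᵥ C) := by
    rw [Set.mem_iInter₂]; exact fun j hj => hint j hj
  obtain ⟨ε, hε, hball⟩ := Metric.isOpen_iff.mp hU p hpU
  set t : ℝ := min (1/2) (ε / (2 * (‖y - p‖ + 1))) with htdef
  have hyp1 : (0:ℝ) < ‖y - p‖ + 1 := by positivity
  have htpos : 0 < t := lt_min (by norm_num) (by positivity)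
  have htle : t ≤ 1/2 := min_le_left _ _
  have hpKi : p ∈ x i +ᵥ C := Set.mem_iInter.mp hp i
  set w : Plane := p + t • (y - p) with hwdef
  have hwKi : w ∈ x i +ᵥ C := by
    have hcomb := (K_convex hC i) hpKi hy (a := 1 - t) (b := t)
      (by linarith) htpos.le (by ring)
    have : w = (1 - t) • p + t • y := by rw [hwdef]; module
    rw [this]
    exact hcomb
  have hwU : w ∈ Metric.ball p ε := by
    rw [Metric.mem_ball, dist_eq_norm, hwdef]
    have h1 : p + t • (y - p) - p = t • (y - p) := by abel
    rw [h1, norm_smul, Real.norm_eq_abs, abs_of_pos htpos]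
    have h2 : t ≤ ε / (2 * (‖y - p‖ + 1)) := min_le_right _ _
    have h3 : t * ‖y - p‖ ≤ (ε / (2 * (‖y - p‖ + 1))) * ‖y - p‖ :=
      mul_le_mul_of_nonneg_right h2 (norm_nonneg _)
    have h4 : (ε / (2 * (‖y - p‖ + 1))) * ‖y - p‖ < ε := by
      rw [div_mul_eq_mul_div, div_lt_iff₀ (by positivity)]
      nlinarith [norm_nonneg (y - p)]
    linarith
  have hwT : w ∈ ⋂ j, x j +ᵥ C := by
    rw [Set.mem_iInter]
    intro j
    by_cases hj : j = i
    · subst hj; exact hwKi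
    · exact interior_subset (Set.mem_iInter₂.mp (hball hwU) j hj)
  have := hu.2 w hwT
  rw [hwdef, inner_add_right, real_inner_smul_right, inner_sub_right] at this
  nlinarith

lemma singular_to_two (hC : IsStrictConvexDomain C) (hCs : IsSmoothDomain C)
    {p : Plane} (hsing : IsSingularPt (⋂ i, x i +ᵥ C) p) :
    ∃ i j : Fin n, i ≠ j ∧ p ∈ frontier (x i +ᵥ C) ∧ p ∈ frontier (x j +ᵥ C) := by
  obtain ⟨hpf, u, v, huv, hu, hv⟩ := hsing
  have hp : p ∈ ⋂ i, x i +ᵥ C := TT_frontier_sub hC hpf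
  obtain ⟨i, hpi⟩ := (TT_frontier_iff hC hp).mp hpf
  by_cases hcase : ∀ j, j ≠ i → p ∈ interior (x j +ᵥ C)
  · exfalso
    have hui := normal_of_singleton hC hp hpi hcase hu
    have hvi := normal_of_singleton hC hp hpi hcase hv
    exact huv (K_normal_unique hC hCs i hpi hui hvi)
  · push_neg at hcase
    obtain ⟨j, hji, hnint⟩ := hcase
    refine ⟨i, j, fun h => hji h.symm, hpi, ?_⟩
    rw [frontier, (K_compact hC j).isClosed.closure_eq]
    exact ⟨Set.mem_iInter.mp hp j, hnint⟩

-- ### smooth points from reducedness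
lemma exists_good_direction (hC : IsStrictConvexDomain C) (hCs : IsSmoothDomain C) (hn : 2 ≤ n)
    (hTint : (interior (⋂ i, x i +ᵥ C)).Nonempty)
    (hred : ∀ j : Fin n, (⋂ i, x i +ᵥ C) ⊂ ⋂ i ∈ {i : Fin n | i ≠ j}, x i +ᵥ C) (j : Fin n) :
    ∃ v : Plane, ‖v‖ = 1 ∧ (∀ i, i ≠ j → ⟪v, x j⟫ < ⟪v, x i⟫) ∧
      ∀ p, IsSingularPt (⋂ i, x i +ᵥ C) p → ¬ IsOuterNormalAt (⋂ i, x i +ᵥ C) p v := by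
  classical
  obtain ⟨q, hqmem, hqnot⟩ := Set.exists_of_ssubset (hred j)
  have hqi : ∀ i, i ≠ j → q ∈ x i +ᵥ C := by
    intro i hi
    exact Set.mem_iInter₂.mp hqmem i hi
  have hqj : q ∉ x j +ᵥ C := by
    intro hqj
    apply hqnot
    rw [Set.mem_iInter]
    intro i
    by_cases hi : i = j
    · subst hi; exact hqj
    · exact hqi i hi
  obtain ⟨p₀, hp₀⟩ := hTint
  have hp₀T : p₀ ∈ ⋂ i, x i +ᵥ C := interior_subset hp₀
  set γ : ℝ → Plane := fun t => p₀ + t • (q - p₀) with hγ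
  have hγcont : Continuous γ := by
    apply continuous_const.add
    exact (continuous_id.smul continuous_const)
  have hγ0 : γ 0 = p₀ := by simp [hγ]
  have hγ1 : γ 1 = q := by simp [hγ]
  set A : Set ℝ := Set.Icc 0 1 ∩ γ ⁻¹' (x j +ᵥ C) with hA
  have hAne : A.Nonempty := ⟨0, ⟨le_refl 0, by norm_num⟩, by
    rw [Set.mem_preimage, hγ0]; exact Set.mem_iInter.mp hp₀T j⟩
  have hAbdd : BddAbove A := ⟨1, fun t ht => ht.1.2⟩
  have hAcl : IsClosed A := (isClosed_Icc).inter ((K_compact hC j).isClosed.preimage hγcont)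
  set t₀ : ℝ := sSup A with ht₀
  have ht₀A : t₀ ∈ A := hAcl.csSup_mem hAne hAbdd
  set z : Plane := γ t₀ with hz
  have hzKj : z ∈ x j +ᵥ C := ht₀A.2
  have ht₀1 : t₀ < 1 := by
    rcases lt_or_eq_of_le ht₀A.1.2 with h | h
    · exact h
    · exfalso; apply hqj; rw [← hγ1, ← h]; exact hzKj
  have ht₀0 : 0 ≤ t₀ := ht₀A.1.1
  -- z is not in the interior of K j
  have hznint : z ∉ interior (x j +ᵥ C) := by
    intro hzint
    obtain ⟨δ, hδ, hball⟩ := Metric.isOpen_iff.mp isOpen_interior z hzint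
    set u : ℝ := min 1 (t₀ + δ / (‖q - p₀‖ + 1)) with hu
    have hnq : (0:ℝ) < ‖q - p₀‖ + 1 := by positivity
    have hpos' : 0 < δ / (‖q - p₀‖ + 1) := by positivity
    have ht₀u : t₀ < u := lt_min ht₀1 (by linarith)
    set t' : ℝ := (t₀ + u) / 2 with ht'
    have h1 : t₀ < t' := by rw [ht']; linarith
    have h2 : t' < u := by rw [ht']; linarith
    have ht'le : t' ≤ 1 := le_trans h2.le (min_le_left _ _)
    have ht'0 : 0 ≤ t' := le_trans ht₀0 h1.le
    have hmem : γ t' ∈ Metric.ball z δ := by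
      rw [Metric.mem_ball, dist_eq_norm, hz]
      have he : γ t' - γ t₀ = (t' - t₀) • (q - p₀) := by
        rw [hγ]; simp only; module
      rw [he, norm_smul, Real.norm_eq_abs, abs_of_pos (by linarith)]
      have h3 : t' - t₀ < δ / (‖q - p₀‖ + 1) := by
        have hmin := min_le_right 1 (t₀ + δ / (‖q - p₀‖ + 1))
        have : t' < t₀ + δ / (‖q - p₀‖ + 1) := lt_of_lt_of_le h2 hmin
        linarith
      calc (t' - t₀) * ‖q - p₀‖ ≤ (t' - t₀) * (‖q - p₀‖ + 1) := by nlinarith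
        _ < (δ / (‖q - p₀‖ + 1)) * (‖q - p₀‖ + 1) := by
            apply mul_lt_mul_of_pos_right h3 hnq
        _ = δ := by field_simp
    have ht'A : t' ∈ A := ⟨⟨ht'0, ht'le⟩, Set.mem_preimage.mpr (interior_subset (hball hmem))⟩
    exact absurd (le_csSup hAbdd ht'A) (not_le.mpr h1)
  have hzfr : z ∈ frontier (x j +ᵥ C) := by
    rw [frontier, (K_compact hC j).isClosed.closure_eq]
    exact ⟨hzKj, hznint⟩
  -- z is in the interior of all the other translates
  have hzint : ∀ i, i ≠ j → z ∈ interior (x i +ᵥ C) := by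
    intro i hi
    have hcomb : z = q + (1 - t₀) • (p₀ - q) := by
      rw [hz, hγ]; simp only; module
    rw [hcomb]
    exact (K_convex hC i).add_smul_sub_mem_interior (hqi i hi)
      (by rw [TT_interior hC] at hp₀; exact Set.mem_iInter.mp hp₀ i)
      ⟨by linarith, by linarith⟩
  have hzT : z ∈ ⋂ i, x i +ᵥ C := by
    rw [Set.mem_iInter]
    intro i
    by_cases hi : i = j
    · subst hi; exact hzKj
    · exact interior_subset (hzint i hi)
  obtain ⟨v, hv⟩ := K_normal_exists hC j hzfr
  have hv0 : v ≠ 0 := by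
    intro h; have := hv.1; rw [h, norm_zero] at this; norm_num at this
  refine ⟨v, hv.1, ?_, ?_⟩
  · intro i hi
    have hCmax := (normal_vadd_iff.mp hv).2
    have hziC : z - x i ∈ interior C := by
      have := hzint i hi
      rw [K_interior] at this
      exact mem_vadd_iff.mp this
    have hlt : ⟪v, z - x i⟫ < ⟪v, z - x j⟫ := interior_lt hv0 hziC hCmax
    rw [inner_sub_right, inner_sub_right] at hlt
    linarith
  · intro p hsingp hnorm
    have hpT : p ∈ ⋂ i, x i +ᵥ C := TT_frontier_sub hC hsingp.1
    have hzv : IsOuterNormalAt (⋂ i, x i +ᵥ C) z v := normal_TT_of_K hzT hv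
    have hpz : p = z := point_unique hC hn hpT hzT hv0 hnorm.2 hzv.2
    obtain ⟨i₁, i₂, hne, hf₁, hf₂⟩ := singular_to_two hC hCs hsingp
    have : ∃ i, i ≠ j ∧ p ∈ frontier (x i +ᵥ C) := by
      by_cases h1 : i₁ = j
      · exact ⟨i₂, by rw [← h1]; exact hne.symm, hf₂⟩
      · exact ⟨i₁, h1, hf₁⟩
    obtain ⟨i, hij, hfi⟩ := this
    rw [hpz] at hfi
    exact hfi.2 (hzint i hij)

-- ### walls
lemma wall_to_singular (hC : IsStrictConvexDomain C) (hCs : IsSmoothDomain C) (hn : 2 ≤ n)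
    (hTint : (interior (⋂ i, x i +ᵥ C)).Nonempty) (hxinj : Function.Injective x)
    {w : Plane} (hw : IsWall x w) :
    ∃ p, IsSingularPt (⋂ i, x i +ᵥ C) p ∧ IsOuterNormalAt (⋂ i, x i +ᵥ C) p w := by
  obtain ⟨hw1, i, j, hij, hmi, hmj⟩ := hw
  have hw0 : w ≠ 0 := by
    intro h; rw [h, norm_zero] at hw1; norm_num at hw1
  have hTTne : (⋂ i, x i +ᵥ C).Nonempty := hTint.mono interior_subset
  obtain ⟨p, hpT, hpmax⟩ := exists_max (TT_compact hC hn) hTTne w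
  have hpfr : p ∈ frontier (⋂ i, x i +ᵥ C) :=
    max_mem_frontier (TT_closed hC) hw0 hpT hpmax
  have hnormal : IsOuterNormalAt (⋂ i, x i +ᵥ C) p w := ⟨hw1, hpmax⟩
  refine ⟨p, ⟨hpfr, ?_⟩, hnormal⟩
  by_contra hns
  have hnsing : ¬ IsSingularPt (⋂ i, x i +ᵥ C) p := fun h => hns h.2
  obtain ⟨i₀, hpi₀⟩ := (TT_frontier_iff hC hpT).mp hpfr
  have hall : ∀ m, m ≠ i₀ → p ∈ interior (x m +ᵥ C) := by
    intro m hm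
    by_contra hmem
    have hpfm : p ∈ frontier (x m +ᵥ C) := by
      rw [frontier, (K_compact hC m).isClosed.closure_eq]
      exact ⟨Set.mem_iInter.mp hpT m, hmem⟩
    exact hnsing (singular_of_two hC hCs hxinj hpT hm hpfm hpi₀)
  have hwKi₀ : IsOuterNormalAt (x i₀ +ᵥ C) p w :=
    normal_of_singleton hC hpT hpi₀ hall hnormal
  have hstrict : ∀ m, m ≠ i₀ → ⟪w, x i₀⟫ < ⟪w, x m⟫ := by
    intro m hm
    have hCmax := (normal_vadd_iff.mp hwKi₀).2
    have hmC : p - x m ∈ interior C := by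
      have := hall m hm
      rw [K_interior] at this
      exact mem_vadd_iff.mp this
    have hlt : ⟪w, p - x m⟫ < ⟪w, p - x i₀⟫ := interior_lt hw0 hmC hCmax
    rw [inner_sub_right, inner_sub_right] at hlt
    linarith
  rcases ne_or_eq i i₀ with h | h
  · exact absurd (hmi i₀) (not_le.mpr (hstrict i h))
  · subst h
    exact absurd (hmj i) (not_le.mpr (hstrict j (Ne.symm hij)))

lemma singular_to_wall (hC : IsStrictConvexDomain C) (hCs : IsSmoothDomain C) (hn : 2 ≤ n)
    (hTint : (interior (⋂ i, x i +ᵥ C)).Nonempty) (hxinj : Function.Injective x)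
    {p : Plane} (hsing : IsSingularPt (⋂ i, x i +ᵥ C) p) :
    ∃ w, IsWall x w ∧ IsOuterNormalAt (⋂ i, x i +ᵥ C) p w := by
  obtain ⟨k, l, hkl, hfk, hfl⟩ := singular_to_two hC hCs hsing
  have hpT : p ∈ ⋂ i, x i +ᵥ C := TT_frontier_sub hC hsing.1
  obtain ⟨uk, huk⟩ := K_normal_exists hC k hfk
  obtain ⟨ul, hul⟩ := K_normal_exists hC l hfl
  have huk0 : uk ≠ 0 := by
    intro h; have := huk.1; rw [h, norm_zero] at this; norm_num at this
  have hukT : IsOuterNormalAt (⋂ i, x i +ᵥ C) p uk := normal_TT_of_K hpT huk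
  have hulT : IsOuterNormalAt (⋂ i, x i +ᵥ C) p ul := normal_TT_of_K hpT hul
  have hne : ul ≠ -uk := by
    intro h
    rw [h] at hulT
    exact no_antipodal hC hTint hukT hulT
  set g : ℝ → Plane := fun t => (1 - t) • uk + t • ul with hg
  have hgcont : Continuous g := by
    apply Continuous.add
    · exact (continuous_const.sub continuous_id).smul continuous_const
    · exact continuous_id.smul continuous_const
  have hg0 : g 0 = uk := by simp [hg]
  have hg1 : g 1 = ul := by simp [hg]
  have hgne : ∀ t ∈ Set.Icc (0:ℝ) 1, g t ≠ 0 := by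
    rintro t ⟨ht0, ht1⟩ h0
    have h1 : (1 - t) • uk = -(t • ul) := by
      have : (1 - t) • uk + t • ul = 0 := h0
      linear_combination (norm := module) this
    have h2 : |1 - t| * ‖uk‖ = |t| * ‖ul‖ := by
      have := congrArg norm h1
      rwa [norm_smul, norm_neg, norm_smul, Real.norm_eq_abs, Real.norm_eq_abs] at this
    rw [huk.1, hul.1, mul_one, mul_one, abs_of_nonneg (by linarith), abs_of_nonneg ht0] at h2
    have ht : t = 1/2 := by linarith
    subst ht
    have h0' : (1 - (1:ℝ)/2) • uk + ((1:ℝ)/2) • ul = 0 := h0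
    apply hne
    linear_combination (norm := module) (2:ℝ) • h0'
  -- normals along the path
  have hgnormal : ∀ t ∈ Set.Icc (0:ℝ) 1, ∀ y ∈ ⋂ i, x i +ᵥ C, ⟪g t, y⟫ ≤ ⟪g t, p⟫ := by
    rintro t ⟨ht0, ht1⟩ y hy
    have h1 := hukT.2 y hy
    have h2 := hulT.2 y hy
    rw [hg]
    simp only [inner_add_left, real_inner_smul_left]
    nlinarith
  set B : Set ℝ := Set.Icc 0 1 ∩ {t | ∀ m, ⟪g t, x k⟫ ≤ ⟪g t, x m⟫} with hB
  have hBcl : IsClosed B := by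
    apply IsClosed.inter isClosed_Icc
    have : {t : ℝ | ∀ m, ⟪g t, x k⟫ ≤ ⟪g t, x m⟫} =
        ⋂ m, {t : ℝ | ⟪g t, x k⟫ ≤ ⟪g t, x m⟫} := by
      ext t; simp [Set.mem_iInter]
    rw [this]
    refine isClosed_iInter fun m => ?_
    exact isClosed_le (Continuous.inner hgcont continuous_const)
      (Continuous.inner hgcont continuous_const)
  have hB0 : (0:ℝ) ∈ B := by
    refine ⟨⟨le_refl 0, by norm_num⟩, ?_⟩
    rw [Set.mem_setOf_eq, hg0]
    exact minAt_of_K_normal hpT huk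
  have hBbdd : BddAbove B := ⟨1, fun t ht => ht.1.2⟩
  set t₀ : ℝ := sSup B with ht₀
  have ht₀B : t₀ ∈ B := hBcl.csSup_mem ⟨0, hB0⟩ hBbdd
  have ht₀0 : 0 ≤ t₀ := ht₀B.1.1
  have ht₀1 : t₀ ≤ 1 := ht₀B.1.2
  -- at t₀ there is a second minimizer
  have hsecond : ∃ m, m ≠ k ∧ ⟪g t₀, x k⟫ = ⟪g t₀, x m⟫ := by
    by_contra hnone
    push_neg at hnone
    have hstrict : ∀ m, m ≠ k → ⟪g t₀, x k⟫ < ⟪g t₀, x m⟫ := by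
      intro m hm
      exact lt_of_le_of_ne (ht₀B.2 m) (hnone m hm)
    rcases eq_or_lt_of_le ht₀1 with h | h
    · -- t₀ = 1 : contradiction with l being a minimizer of ul
      have : ⟪g t₀, x k⟫ < ⟪g t₀, x l⟫ := hstrict l (Ne.symm hkl)
      rw [h, hg1] at this
      have hml : MinAt x l ul := minAt_of_K_normal hpT hul
      exact absurd (hml k) (not_le.mpr this)
    · -- t₀ < 1 : can move beyond t₀
      have hOset : {t : ℝ | ∀ m, m ≠ k → ⟪g t, x k⟫ < ⟪g t, x m⟫} =
          ⋂ m, ⋂ (_ : m ≠ k), {t : ℝ | ⟪g t, x k⟫ < ⟪g t, x m⟫} := by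
        ext t; simp [Set.mem_iInter]
      have hO : IsOpen {t : ℝ | ∀ m, m ≠ k → ⟪g t, x k⟫ < ⟪g t, x m⟫} := by
        rw [hOset]
        exact isOpen_iInter_of_finite fun m => isOpen_iInter_of_finite fun _ =>
          isOpen_lt (Continuous.inner hgcont continuous_const)
            (Continuous.inner hgcont continuous_const)
      have ht₀O : t₀ ∈ {t : ℝ | ∀ m, m ≠ k → ⟪g t, x k⟫ < ⟪g t, x m⟫} := hstrict
      obtain ⟨δ, hδ, hball⟩ := Metric.isOpen_iff.mp hO t₀ ht₀O
      set t' : ℝ := min 1 (t₀ + δ/2) with ht'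
      have ht'gt : t₀ < t' := lt_min h (by linarith)
      have ht'le1 : t' ≤ 1 := min_le_left _ _
      have ht'ball : t' ∈ Metric.ball t₀ δ := by
        rw [Metric.mem_ball, Real.dist_eq, abs_of_pos (by linarith)]
        have := min_le_right 1 (t₀ + δ/2)
        linarith
      have ht'B : t' ∈ B := by
        refine ⟨⟨by linarith, ht'le1⟩, ?_⟩
        intro m
        by_cases hm : m = k
        · subst hm; exact le_refl _
        · exact (hball ht'ball m hm).le
      exact absurd (le_csSup hBbdd ht'B) (not_le.mpr ht'gt)
  obtain ⟨m, hmk, hmeq⟩ := hsecond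
  have hgt₀ne : g t₀ ≠ 0 := hgne t₀ ⟨ht₀0, ht₀1⟩
  have hgnorm : (0:ℝ) < ‖g t₀‖ := norm_pos_iff.mpr hgt₀ne
  set w : Plane := ‖g t₀‖⁻¹ • g t₀ with hw
  have hwunit : ‖w‖ = 1 := by
    rw [hw, norm_smul, Real.norm_eq_abs, abs_of_pos (inv_pos.mpr hgnorm)]
    field_simp
  have hcpos : (0:ℝ) ≤ ‖g t₀‖⁻¹ := (inv_pos.mpr hgnorm).le
  refine ⟨w, ⟨hwunit, k, m, Ne.symm hmk, ?_, ?_⟩, ⟨hwunit, ?_⟩⟩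
  · intro m'
    rw [hw, real_inner_smul_left, real_inner_smul_left]
    exact mul_le_mul_of_nonneg_left (ht₀B.2 m') hcpos
  · intro m'
    rw [hw, real_inner_smul_left, real_inner_smul_left]
    exact mul_le_mul_of_nonneg_left (hmeq ▸ ht₀B.2 m') hcpos
  · intro y hy
    rw [hw, real_inner_smul_left, real_inner_smul_left]
    exact mul_le_mul_of_nonneg_left (hgnormal t₀ ⟨ht₀0, ht₀1⟩ y hy) hcpos


lemma minAt_weak_of_strict {v : Plane} {i : Fin n}
    (h : ∀ m, m ≠ i → ⟪v, x i⟫ < ⟪v, x m⟫) : MinAt x i v := by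
  intro m
  by_cases hm : m = i
  · subst hm; exact le_refl _
  · exact (h m hm).le

lemma minAt_combo {i : Fin n} {a b c : Plane} {α β : ℝ} (hα : 0 ≤ α) (hβ : 0 ≤ β)
    (ha : MinAt x i a) (hb : MinAt x i b) (hc : c = α • a + β • b) : MinAt x i c := by
  intro m
  rw [hc]
  simp only [inner_add_left, real_inner_smul_left]
  have h1 := ha m
  have h2 := hb m
  nlinarith

lemma strict_combo {i : Fin n} {a b c : Plane} {α β : ℝ} (hα : 0 < α) (hβ : 0 ≤ β)
    (ha : ∀ m, m ≠ i → ⟪a, x i⟫ < ⟪a, x m⟫) (hb : MinAt x i b) (hc : c = α • a + β • b) :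
    ∀ m, m ≠ i → ⟪c, x i⟫ < ⟪c, x m⟫ := by
  intro m hm
  rw [hc]
  simp only [inner_add_left, real_inner_smul_left]
  have h1 := ha m hm
  have h2 := hb m
  nlinarith

lemma normal_combo {p a b c : Plane} {α β : ℝ} (hα : 0 ≤ α) (hβ : 0 ≤ β)
    (ha : IsOuterNormalAt (⋂ i, x i +ᵥ C) p a) (hb : IsOuterNormalAt (⋂ i, x i +ᵥ C) p b)
    (hc : c = α • a + β • b) (hc1 : ‖c‖ = 1) : IsOuterNormalAt (⋂ i, x i +ᵥ C) p c := by
  refine ⟨hc1, fun y hy => ?_⟩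
  rw [hc]
  simp only [inner_add_left, real_inner_smul_left]
  have h1 := ha.2 y hy
  have h2 := hb.2 y hy
  nlinarith

lemma unit_ne_zero {w : Plane} (hw : ‖w‖ = 1) : w ≠ 0 := by
  intro h; rw [h, norm_zero] at hw; norm_num at hw

lemma wall_inj_aux {p w w' vi : Plane} {i j : Fin n} (hij : i ≠ j)
    (hw1 : ‖w‖ = 1) (hvi1 : ‖vi‖ = 1)
    (hmi : MinAt x i w) (hmj : MinAt x j w)
    (hw'wall : IsWall x w')
    (hsing : IsSingularPt (⋂ i, x i +ᵥ C) p)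
    (hnw : IsOuterNormalAt (⋂ i, x i +ᵥ C) p w)
    (hnw' : IsOuterNormalAt (⋂ i, x i +ᵥ C) p w')
    (hvistrict : ∀ m, m ≠ i → ⟪vi, x i⟫ < ⟪vi, x m⟫)
    (hvinot : ¬ IsOuterNormalAt (⋂ i, x i +ᵥ C) p vi)
    (hsame : 0 < ⟪Jv w, vi⟫ * ⟪Jv w, w'⟫) : False := by
  have hw0 : w ≠ 0 := unit_ne_zero hw1
  have hDw' : ⟪Jv w, w'⟫ ≠ 0 := by
    intro h0; rw [h0, mul_zero] at hsame; exact lt_irrefl _ hsame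
  have hviweak : MinAt x i vi := minAt_weak_of_strict hvistrict
  have heqij : ⟪w, x i⟫ = ⟪w, x j⟫ := le_antisymm (hmi j) (hmj i)
  have hcone : ∀ α β : ℝ, 0 ≤ α → 0 ≤ β → vi = α • w + β • w' → False := fun α β hα hβ hc =>
    hvinot (normal_combo hα hβ hnw hnw' hc hvi1)
  rcases cone_side hw0 hsame with ⟨α, β, hα, hβ, hcomb⟩ | ⟨α, β, hα, hβ, hcomb⟩
  swap
  · exact hcone α β hα hβ.le hcomb
  -- hcomb : w' = α • w + β • vi
  have hmiw' : MinAt x i w' := minAt_combo hα hβ.le hmi hviweak hcomb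
  obtain ⟨k, l, hkl, hmk, hml⟩ := hw'wall.2
  have hsec : ∃ l, l ≠ i ∧ MinAt x l w' := by
    by_cases hki : k = i
    · subst hki
      exact ⟨l, Ne.symm hkl, hml⟩
    · exact ⟨k, hki, hmk⟩
  obtain ⟨l', hli, hml'⟩ := hsec
  have heqil : ⟪w', x i⟫ = ⟪w', x l'⟫ := le_antisymm (hmiw' l') (hml' i)
  obtain ⟨α', β', hd⟩ := coords hw0 hDw' (z := vi)
  rcases le_or_gt 0 β' with hβ' | hβ'
  · rcases le_or_gt 0 α' with hα' | hα'
    · exact hcone α' β' hα' hβ' hd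
    · -- α' < 0 ≤ β'
      rcases eq_or_lt_of_le hβ' with hβ'0 | hβ'0
      · -- β' = 0 : vi = α' • w with α' < 0, units force vi = -w, contradicting hsame
        have hd' : vi = α' • w := by rw [hd, ← hβ'0]; module
        have hJ : ⟪Jv w, vi⟫ = 0 := by
          rw [hd', real_inner_smul_right, inner_Jv_self, mul_zero]
        rw [hJ, zero_mul] at hsame
        exact lt_irrefl _ hsame
      · -- β' > 0 : w' is a strict minimizer at i, contradicting l'
        have hβne : β' ≠ 0 := ne_of_gt hβ'0
        have h2 : β' • w' = vi - α' • w := by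
          linear_combination (norm := module) (-1 : ℝ) • hd
        have hw'eq : w' = β'⁻¹ • vi + (-α' * β'⁻¹) • w := by
          have h3 : w' = β'⁻¹ • (vi - α' • w) := by
            rw [← h2, inv_smul_smul₀ hβne]
          rw [h3]; module
        have hstrict := strict_combo (inv_pos.mpr hβ'0)
          (by have := inv_pos.mpr hβ'0; nlinarith : (0:ℝ) ≤ -α' * β'⁻¹) hvistrict hmi hw'eq
        exact absurd heqil (ne_of_lt (hstrict l' hli))
  · -- β' < 0
    rcases le_or_gt α' 0 with hα' | hα'
    · -- -vi is a combination of w, w' with nonneg coefficients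
      have hd' : -vi = (-α') • w + (-β') • w' := by
        linear_combination (norm := module) (-1 : ℝ) • hd
      have hmni : MinAt x i (-vi) :=
        minAt_combo (neg_nonneg.mpr hα') (neg_nonneg.mpr hβ'.le) hmi hmiw' hd'
      have h1 := hmni j
      rw [inner_neg_left, inner_neg_left] at h1
      have h2 := hvistrict j (Ne.symm hij)
      linarith
    · -- α' > 0 : w is a strict minimizer at i, contradicting j
      have hαne : α' ≠ 0 := ne_of_gt hα'
      have h2 : α' • w = vi - β' • w' := by
        linear_combination (norm := module) (-1 : ℝ) • hd
      have hweq : w = α'⁻¹ • vi + (-β' * α'⁻¹) • w' := by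
        have h3 : w = α'⁻¹ • (vi - β' • w') := by
          rw [← h2, inv_smul_smul₀ hαne]
        rw [h3]; module
      have hstrict := strict_combo (inv_pos.mpr hα')
        (by have := inv_pos.mpr hα'; nlinarith : (0:ℝ) ≤ -β' * α'⁻¹) hvistrict hmiw' hweq
      exact absurd heqij (ne_of_lt (hstrict j (Ne.symm hij)))

lemma wall_injective (hC : IsStrictConvexDomain C) (hCs : IsSmoothDomain C) (hn : 2 ≤ n)
    (hTint : (interior (⋂ i, x i +ᵥ C)).Nonempty)
    (hred : ∀ j : Fin n, (⋂ i, x i +ᵥ C) ⊂ ⋂ i ∈ {i : Fin n | i ≠ j}, x i +ᵥ C)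
    (hxinj : Function.Injective x)
    {p w w' : Plane} (hw : IsWall x w) (hw' : IsWall x w')
    (hsing : IsSingularPt (⋂ i, x i +ᵥ C) p)
    (hnw : IsOuterNormalAt (⋂ i, x i +ᵥ C) p w)
    (hnw' : IsOuterNormalAt (⋂ i, x i +ᵥ C) p w') : w = w' := by
  by_contra hne
  obtain ⟨hw1, i, j, hij, hmi, hmj⟩ := hw
  have hw0 : w ≠ 0 := unit_ne_zero hw1
  have heqij : ⟪w, x i⟫ = ⟪w, x j⟫ := le_antisymm (hmi j) (hmj i)
  have hw'nw : w' ≠ -w := by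
    intro h
    rw [h] at hnw'
    exact no_antipodal hC hTint hnw hnw'
  obtain ⟨vi, hvi1, hvistrict, hvinot⟩ := exists_good_direction hC hCs hn hTint hred i
  obtain ⟨vj, hvj1, hvjstrict, hvjnot⟩ := exists_good_direction hC hCs hn hTint hred j
  have hDvi : ⟪Jv w, vi⟫ ≠ 0 := by
    intro h0
    rcases span_units hw1 hvi1 h0 with h | h
    · exact absurd heqij (ne_of_lt (h ▸ hvistrict j (Ne.symm hij)))
    · have := hvistrict j (Ne.symm hij)
      rw [h, inner_neg_left, inner_neg_left] at this
      linarith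
  have hDvj : ⟪Jv w, vj⟫ ≠ 0 := by
    intro h0
    rcases span_units hw1 hvj1 h0 with h | h
    · exact absurd heqij.symm (ne_of_lt (h ▸ hvjstrict i hij))
    · have := hvjstrict i hij
      rw [h, inner_neg_left, inner_neg_left] at this
      linarith
  have hDw' : ⟪Jv w, w'⟫ ≠ 0 := by
    intro h0
    rcases span_units hw1 hw'.1 h0 with h | h
    · exact hne h.symm
    · exact hw'nw h
  have hopp : ⟪Jv w, vi⟫ * ⟪Jv w, vj⟫ < 0 := by
    rcases lt_trichotomy (⟪Jv w, vi⟫ * ⟪Jv w, vj⟫) 0 with h | h | h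
    · exact h
    · exact absurd h (mul_ne_zero hDvi hDvj)
    · exfalso
      rcases cone_side hw0 h with ⟨α, β, hα, hβ, hcomb⟩ | ⟨α, β, hα, hβ, hcomb⟩
      · -- vj = α w + β vi : i minimizes vj, contradicting strictness of vj at j
        have hm : MinAt x i vj :=
          minAt_combo hα hβ.le hmi (minAt_weak_of_strict hvistrict) hcomb
        have h1 := hm j
        have h2 := hvjstrict i hij
        linarith
      · have hm : MinAt x j vi :=
          minAt_combo hα hβ.le hmj (minAt_weak_of_strict hvjstrict) hcomb
        have h1 := hm i
        have h2 := hvistrict j (Ne.symm hij)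
        linarith
  have hdisj : 0 < ⟪Jv w, vi⟫ * ⟪Jv w, w'⟫ ∨ 0 < ⟪Jv w, vj⟫ * ⟪Jv w, w'⟫ := by
    rcases lt_or_gt_of_ne hDw' with h1 | h1 <;>
      rcases lt_or_gt_of_ne hDvi with h2 | h2 <;>
        rcases lt_or_gt_of_ne hDvj with h3 | h3 <;>
          first
            | (left; nlinarith)
            | (right; nlinarith)
            | (exfalso; nlinarith)
  rcases hdisj with h | h
  · exact wall_inj_aux hij hw1 hvi1 hmi hmj hw' hsing hnw hnw' hvistrict
      (hvinot p hsing) h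
  · exact wall_inj_aux (Ne.symm hij) hw1 hvj1 hmj hmi hw' hsing hnw hnw' hvjstrict
      (hvjnot p hsing) h


lemma aux_mid (hw0 : w ≠ 0) {va : Plane} {a b c : Fin n}
    (hba : b ≠ a) (hca : c ≠ a)
    (heab : ⟪w, x a⟫ = ⟪w, x b⟫) (heac : ⟪w, x a⟫ = ⟪w, x c⟫)
    (hlt1 : ⟪Jv w, x b⟫ < ⟪Jv w, x a⟫) (hlt2 : ⟪Jv w, x a⟫ < ⟪Jv w, x c⟫)
    (hvastrict : ∀ m, m ≠ a → ⟪va, x a⟫ < ⟪va, x m⟫) : False := by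
  set A : ℝ := ⟪Jv w, x a⟫ with hA
  set B : ℝ := ⟪Jv w, x b⟫ with hB
  set D : ℝ := ⟪Jv w, x c⟫ with hD
  set t : ℝ := (A - B) / (D - B) with htdef
  have hden : (0:ℝ) < D - B := by linarith
  have hdenne : D - B ≠ 0 := hden.ne'
  have ht0 : 0 < t := div_pos (by linarith) hden
  have ht1 : t < 1 := by
    rw [htdef, div_lt_one hden]; linarith
  have hcomb : x a = (1 - t) • x b + t • x c := by
    have hz : x a - ((1 - t) • x b + t • x c) = 0 := by
      apply eq_zero_of_perp2 hw0
      · rw [inner_sub_right, inner_add_right, real_inner_smul_right, real_inner_smul_right]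
        rw [← heab, ← heac]
        ring
      · rw [inner_sub_right, inner_add_right, real_inner_smul_right, real_inner_smul_right]
        rw [← hA, ← hB, ← hD, htdef]
        field_simp
        ring
    exact sub_eq_zero.mp hz
  have h1 := hvastrict b hba
  have h2 := hvastrict c hca
  have h3 : ⟪va, x a⟫ = (1 - t) * ⟪va, x b⟫ + t * ⟪va, x c⟫ := by
    rw [hcomb, inner_add_right, real_inner_smul_right, real_inner_smul_right]
  nlinarith

lemma no_three_min (hxinj : Function.Injective x)
    (hgood : ∀ i : Fin n, ∃ v : Plane, ‖v‖ = 1 ∧ ∀ m, m ≠ i → ⟪v, x i⟫ < ⟪v, x m⟫)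
    {w : Plane} (hw1 : ‖w‖ = 1) {a b c : Fin n} (hab : a ≠ b) (hac : a ≠ c) (hbc : b ≠ c)
    (hma : MinAt x a w) (hmb : MinAt x b w) (hmc : MinAt x c w) : False := by
  have hw0 : w ≠ 0 := unit_ne_zero hw1
  have heab : ⟪w, x a⟫ = ⟪w, x b⟫ := le_antisymm (hma b) (hmb a)
  have heac : ⟪w, x a⟫ = ⟪w, x c⟫ := le_antisymm (hma c) (hmc a)
  have hebc : ⟪w, x b⟫ = ⟪w, x c⟫ := by rw [← heab, heac]
  have hs : ∀ p q : Fin n, p ≠ q → ⟪w, x p⟫ = ⟪w, x q⟫ → ⟪Jv w, x p⟫ ≠ ⟪Jv w, x q⟫ := by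
    intro p q hpq hpweq h
    apply hpq
    apply hxinj
    have : x p - x q = 0 := by
      apply eq_zero_of_perp2 hw0
      · rw [inner_sub_right]; linarith
      · rw [inner_sub_right]; linarith
    exact sub_eq_zero.mp this
  have hsab := hs a b hab heab
  have hsac := hs a c hac heac
  have hsbc := hs b c hbc hebc
  obtain ⟨va, hva1, hvas⟩ := hgood a
  obtain ⟨vb, hvb1, hvbs⟩ := hgood b
  obtain ⟨vc, hvc1, hvcs⟩ := hgood c
  rcases hsab.lt_or_gt with h1 | h1 <;> rcases hsac.lt_or_gt with h2 | h2 <;>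
    rcases hsbc.lt_or_gt with h3 | h3
  · -- sa<sb, sa<sc, sb<sc : middle b
    exact aux_mid hw0 hab (Ne.symm hbc) heab.symm hebc h1 h3 hvbs
  · -- sa<sb, sa<sc, sc<sb : middle c
    exact aux_mid hw0 hac hbc heac.symm hebc.symm h2 h3 hvcs
  · -- sa<sb, sc<sa, sb<sc : impossible
    exact absurd (lt_trans h1 h3) (not_lt.mpr h2.le)
  · -- sa<sb, sc<sa : middle a
    exact aux_mid hw0 (Ne.symm hac) (Ne.symm hab) heac heab h2 h1 hvas
  · -- sb<sa, sa<sc, sb<sc : middle a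
    exact aux_mid hw0 (Ne.symm hab) (Ne.symm hac) heab heac h1 h2 hvas
  · -- sb<sa, sa<sc, sc<sb : impossible
    exact absurd (lt_trans h3 h1) (not_lt.mpr h2.le)
  · -- sb<sa, sc<sa, sb<sc : middle c
    exact aux_mid hw0 hbc hac hebc.symm heac.symm h3 h2 hvcs
  · -- sb<sa, sc<sa, sc<sb : middle b
    exact aux_mid hw0 (Ne.symm hbc) hab hebc heab.symm h3 h1 hvbs

lemma wall_two_min (hC : IsStrictConvexDomain C) (hCs : IsSmoothDomain C) (hn : 2 ≤ n)
    (hTint : (interior (⋂ i, x i +ᵥ C)).Nonempty)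
    (hred : ∀ j : Fin n, (⋂ i, x i +ᵥ C) ⊂ ⋂ i ∈ {i : Fin n | i ≠ j}, x i +ᵥ C)
    (hxinj : Function.Injective x) {w : Plane} (hw : IsWall x w) :
    ∃ i j : Fin n, i ≠ j ∧ {m : Fin n | MinAt x m w} = {i, j} := by
  obtain ⟨hw1, i, j, hij, hmi, hmj⟩ := hw
  have hgood : ∀ i : Fin n, ∃ v : Plane, ‖v‖ = 1 ∧ ∀ m, m ≠ i → ⟪v, x i⟫ < ⟪v, x m⟫ := by
    intro i
    obtain ⟨v, hv1, hv2, -⟩ := exists_good_direction hC hCs hn hTint hred i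
    exact ⟨v, hv1, hv2⟩
  refine ⟨i, j, hij, ?_⟩
  ext m
  simp only [Set.mem_setOf_eq, Set.mem_insert_iff, Set.mem_singleton_iff]
  constructor
  · intro hm
    by_contra hcon
    push_neg at hcon
    exact no_three_min hxinj hgood hw1 hij (fun h => hcon.1 h.symm)
      (fun h => hcon.2 h.symm) hmi hmj hm
  · rintro (rfl | rfl)
    · exact hmi
    · exact hmj


lemma wall_partner {w : Plane} {i : Fin n} (hw : IsWall x w) (hmi : MinAt x i w) :
    ∃ m, m ≠ i ∧ ⟪w, x i⟫ = ⟪w, x m⟫ := by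
  obtain ⟨-, k, l, hkl, hmk, hml⟩ := hw
  by_cases hki : k = i
  · subst hki
    exact ⟨l, Ne.symm hkl, le_antisymm (hmi l) (hml k)⟩
  · exact ⟨k, hki, le_antisymm (hmi k) (hmk i)⟩

lemma rot_wall {i : Fin n} {vi : Plane} (hvi1 : ‖vi‖ = 1)
    (hvistrict : ∀ m, m ≠ i → ⟪vi, x i⟫ < ⟪vi, x m⟫)
    (hm₀ : ∃ m : Fin n, m ≠ i) {s : ℝ} (hs : s = 1 ∨ s = -1) :
    ∃ t : ℝ, 0 ≤ t ∧ t < Real.pi ∧ IsWall x (rot (s*t) vi) ∧ MinAt x i (rot (s*t) vi) := by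
  have hπ := Real.pi_pos
  set r : ℝ → Plane := fun t => rot (s*t) vi with hr
  have hrcont : Continuous r := (continuous_rot vi).comp (continuous_const.mul continuous_id)
  have hrunit : ∀ t, ‖r t‖ = 1 := fun t => norm_rot hvi1 _
  have hr0 : r 0 = vi := by rw [hr]; simp [rot_zero]
  have hrπ : r Real.pi = -vi := by
    rcases hs with rfl | rfl
    · rw [hr]; simp only [one_mul]; exact rot_pi vi
    · rw [hr]
      simp only [neg_one_mul]
      unfold rot
      rw [Real.cos_neg, Real.sin_neg, Real.cos_pi, Real.sin_pi]
      simp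
  set B : Set ℝ := Set.Icc 0 Real.pi ∩ {t | ∀ m, ⟪r t, x i⟫ ≤ ⟪r t, x m⟫} with hB
  have hBcl : IsClosed B := by
    apply IsClosed.inter isClosed_Icc
    have : {t : ℝ | ∀ m, ⟪r t, x i⟫ ≤ ⟪r t, x m⟫} =
        ⋂ m, {t : ℝ | ⟪r t, x i⟫ ≤ ⟪r t, x m⟫} := by
      ext t; simp [Set.mem_iInter]
    rw [this]
    exact isClosed_iInter fun m => isClosed_le
      (Continuous.inner hrcont continuous_const) (Continuous.inner hrcont continuous_const)
  have hB0 : (0:ℝ) ∈ B := by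
    refine ⟨⟨le_refl 0, hπ.le⟩, ?_⟩
    rw [Set.mem_setOf_eq, hr0]
    exact minAt_weak_of_strict hvistrict
  have hBbdd : BddAbove B := ⟨Real.pi, fun t ht => ht.1.2⟩
  set t₀ : ℝ := sSup B with ht₀
  have ht₀B : t₀ ∈ B := hBcl.csSup_mem ⟨0, hB0⟩ hBbdd
  have hmint₀ : MinAt x i (r t₀) := ht₀B.2
  have ht₀π : t₀ < Real.pi := by
    rcases lt_or_eq_of_le ht₀B.1.2 with h | h
    · exact h
    · exfalso
      obtain ⟨m₀, hm₀i⟩ := hm₀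
      have h1 := hmint₀ m₀
      rw [h, hrπ, inner_neg_left, inner_neg_left] at h1
      have h2 := hvistrict m₀ hm₀i
      linarith
  have hsecond : ∃ m, m ≠ i ∧ ⟪r t₀, x i⟫ = ⟪r t₀, x m⟫ := by
    by_contra hnone
    push_neg at hnone
    have hstrict : ∀ m, m ≠ i → ⟪r t₀, x i⟫ < ⟪r t₀, x m⟫ := fun m hm =>
      lt_of_le_of_ne (hmint₀ m) (hnone m hm)
    have hOset : {t : ℝ | ∀ m, m ≠ i → ⟪r t, x i⟫ < ⟪r t, x m⟫} =
        ⋂ m, ⋂ (_ : m ≠ i), {t : ℝ | ⟪r t, x i⟫ < ⟪r t, x m⟫} := by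
      ext t; simp [Set.mem_iInter]
    have hO : IsOpen {t : ℝ | ∀ m, m ≠ i → ⟪r t, x i⟫ < ⟪r t, x m⟫} := by
      rw [hOset]
      exact isOpen_iInter_of_finite fun m => isOpen_iInter_of_finite fun _ =>
        isOpen_lt (Continuous.inner hrcont continuous_const)
          (Continuous.inner hrcont continuous_const)
    obtain ⟨δ, hδ, hball⟩ := Metric.isOpen_iff.mp hO t₀ hstrict
    set t' : ℝ := min Real.pi (t₀ + δ/2) with ht'
    have ht'gt : t₀ < t' := lt_min ht₀π (by linarith)
    have ht'ball : t' ∈ Metric.ball t₀ δ := by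
      rw [Metric.mem_ball, Real.dist_eq, abs_of_pos (by linarith)]
      have := min_le_right Real.pi (t₀ + δ/2)
      linarith
    have ht'B : t' ∈ B := by
      refine ⟨⟨by linarith [ht₀B.1.1], min_le_left _ _⟩, ?_⟩
      intro m
      by_cases hm : m = i
      · subst hm; exact le_refl _
      · exact (hball ht'ball m hm).le
    exact absurd (le_csSup hBbdd ht'B) (not_le.mpr ht'gt)
  obtain ⟨m, hmi', hmeq⟩ := hsecond
  refine ⟨t₀, ht₀B.1.1, ht₀π, ⟨hrunit t₀, i, m, Ne.symm hmi', hmint₀, ?_⟩, hmint₀⟩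
  intro m'
  rw [← hmeq]
  exact hmint₀ m'

lemma three_walls_false (hxinj : Function.Injective x) {i : Fin n} {w1 w2 w3 : Plane}
    (h12 : w1 ≠ w2) (h13 : w1 ≠ w3) (h23 : w2 ≠ w3)
    (hu1 : ‖w1‖ = 1) (hu2 : ‖w2‖ = 1) (hu3 : ‖w3‖ = 1)
    (hm1 : MinAt x i w1) (hm2 : MinAt x i w2) (hm3 : MinAt x i w3)
    (hp1 : ∃ m, m ≠ i ∧ ⟪w1, x i⟫ = ⟪w1, x m⟫)
    (hp2 : ∃ m, m ≠ i ∧ ⟪w2, x i⟫ = ⟪w2, x m⟫)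
    (hp3 : ∃ m, m ≠ i ∧ ⟪w3, x i⟫ = ⟪w3, x m⟫) : False := by
  -- if some unit vector is perpendicular to all differences, all three walls coincide up to sign
  have noPA : ∀ a : Plane, ‖a‖ = 1 → (∀ m, ⟪a, x i⟫ = ⟪a, x m⟫) → False := by
    intro a ha hPA
    have key : ∀ u : Plane, ‖u‖ = 1 → (∃ m, m ≠ i ∧ ⟪u, x i⟫ = ⟪u, x m⟫) →
        u = a ∨ u = -a := by
      rintro u hu ⟨m, hmi', hmeq⟩
      have hd : x i - x m ≠ 0 := sub_ne_zero.mpr (fun h => hmi' (hxinj h.symm))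
      apply unit_perp hd ha hu
      · rw [inner_sub_right]; linarith [hPA m]
      · rw [inner_sub_right]; linarith [hmeq]
    have e1 := key w1 hu1 hp1
    have e2 := key w2 hu2 hp2
    have e3 := key w3 hu3 hp3
    rcases e1 with e1 | e1 <;> rcases e2 with e2 | e2 <;> rcases e3 with e3 | e3 <;>
      first
        | exact h12 (e1.trans e2.symm)
        | exact h13 (e1.trans e3.symm)
        | exact h23 (e2.trans e3.symm)
  -- pairwise non-degeneracy
  have hJgen : ∀ u v : Plane, ‖u‖ = 1 → ‖v‖ = 1 → u ≠ v → MinAt x i u → MinAt x i v →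
      ⟪Jv u, v⟫ ≠ 0 := by
    intro u v hu hv huv hmu hmv h0
    rcases span_units hu hv h0 with h | h
    · exact huv h.symm
    · apply noPA u hu
      intro m
      have h1 := hmu m
      have h2 := hmv m
      rw [h, inner_neg_left, inner_neg_left] at h2
      linarith
  have hJ12 := hJgen w1 w2 hu1 hu2 h12 hm1 hm2
  have hJ31 := hJgen w3 w1 hu3 hu1 (Ne.symm h13) hm3 hm1
  have hJ32 := hJgen w3 w2 hu3 hu2 (Ne.symm h23) hm3 hm2
  -- pair disjunction : two distinct walls cannot both be tight at the same m
  have hpairgen : ∀ u v : Plane, ‖u‖ = 1 → ‖v‖ = 1 → ⟪Jv u, v⟫ ≠ 0 →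
      MinAt x i u → MinAt x i v →
      ∀ m, m ≠ i → ⟪u, x i⟫ < ⟪u, x m⟫ ∨ ⟪v, x i⟫ < ⟪v, x m⟫ := by
    intro u v hu hv hJ hmu hmv m hm
    by_contra hcon
    push_neg at hcon
    have he1 : ⟪u, x i⟫ = ⟪u, x m⟫ := le_antisymm (hmu m) hcon.1
    have he2 : ⟪v, x i⟫ = ⟪v, x m⟫ := le_antisymm (hmv m) hcon.2
    have hd : x i - x m ≠ 0 := sub_ne_zero.mpr (fun h => hm (hxinj h).symm)
    rcases unit_perp hd hu hv (by rw [inner_sub_right]; linarith)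
      (by rw [inner_sub_right]; linarith) with h | h
    · rw [h] at hJ; exact hJ (inner_Jv_self u)
    · rw [h] at hJ
      rw [inner_neg_right, inner_Jv_self, neg_zero] at hJ
      exact hJ rfl
  -- strict combination
  have strictc : ∀ (u v c : Plane) (a b : ℝ), 0 < a → 0 < b → MinAt x i u → MinAt x i v →
      (∀ m, m ≠ i → ⟪u, x i⟫ < ⟪u, x m⟫ ∨ ⟪v, x i⟫ < ⟪v, x m⟫) →
      c = a • u + b • v → ∀ m, m ≠ i → ⟪c, x i⟫ < ⟪c, x m⟫ := by
    intro u v c a b ha hb hmu hmv hdisj hc m hm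
    rw [hc]
    simp only [inner_add_left, real_inner_smul_left]
    have h1 := hmu m
    have h2 := hmv m
    rcases hdisj m hm with h | h
    · nlinarith
    · nlinarith
  have wallcontra : ∀ u : Plane, (∃ m, m ≠ i ∧ ⟪u, x i⟫ = ⟪u, x m⟫) →
      (∀ m, m ≠ i → ⟪u, x i⟫ < ⟪u, x m⟫) → False := by
    rintro u ⟨m, hm, hmeq⟩ hstrict
    exact absurd hmeq (ne_of_lt (hstrict m hm))
  obtain ⟨α, β, hd⟩ := coords (unit_ne_zero hu1) hJ12 (z := w3)
  rcases le_or_gt 0 β with hβ | hβ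
  · rcases le_or_gt 0 α with hα | hα
    · -- both nonneg
      rcases eq_or_lt_of_le hα with hα0 | hα0
      · -- α = 0 : w3 = β • w2
        have hd' : w3 = β • w2 := by rw [hd, ← hα0]; module
        have : β = 1 := by
          have := congrArg norm hd'
          rw [norm_smul, hu2, hu3, Real.norm_eq_abs, mul_one] at this
          rw [abs_of_nonneg hβ] at this
          linarith
        rw [this, one_smul] at hd'
        exact h23 hd'.symm
      · rcases eq_or_lt_of_le hβ with hβ0 | hβ0
        · have hd' : w3 = α • w1 := by rw [hd, ← hβ0]; module
          have : α = 1 := by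
            have := congrArg norm hd'
            rw [norm_smul, hu1, hu3, Real.norm_eq_abs, mul_one] at this
            rw [abs_of_pos hα0] at this
            linarith
          rw [this, one_smul] at hd'
          exact h13 hd'.symm
        · exact wallcontra w3 hp3
            (strictc w1 w2 w3 α β hα0 hβ0 hm1 hm2
              (hpairgen w1 w2 hu1 hu2 hJ12 hm1 hm2) hd)
    · -- α < 0 ≤ β
      rcases eq_or_lt_of_le hβ with hβ0 | hβ0
      · -- β = 0 : w3 = α w1 with α < 0 forces w3 = -w1, hence PA w1
        have hd' : w3 = α • w1 := by rw [hd, ← hβ0]; module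
        have : α = -1 := by
          have := congrArg norm hd'
          rw [norm_smul, hu1, hu3, Real.norm_eq_abs, mul_one] at this
          rw [abs_of_neg hα] at this
          linarith
        rw [this] at hd'
        apply noPA w1 hu1
        intro m
        have h1 := hm1 m
        have h2 := hm3 m
        rw [hd', neg_one_smul, inner_neg_left, inner_neg_left] at h2
        linarith
      · -- β > 0 : w2 is a strict minimizer
        have hβne : β ≠ 0 := ne_of_gt hβ0
        have h2 : β • w2 = w3 - α • w1 := by
          linear_combination (norm := module) (-1 : ℝ) • hd
        have hw2eq : w2 = β⁻¹ • w3 + (-α * β⁻¹) • w1 := by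
          have h3 : w2 = β⁻¹ • (w3 - α • w1) := by rw [← h2, inv_smul_smul₀ hβne]
          rw [h3]; module
        exact wallcontra w2 hp2
          (strictc w3 w1 w2 β⁻¹ (-α * β⁻¹) (inv_pos.mpr hβ0)
            (by have := inv_pos.mpr hβ0; nlinarith) hm3 hm1
            (hpairgen w3 w1 hu3 hu1 hJ31 hm3 hm1) hw2eq)
  · rcases le_or_gt α 0 with hα | hα
    · -- α ≤ 0, β < 0 : -w3 is a nonneg combination, so w3 is PA
      have hd' : -w3 = (-α) • w1 + (-β) • w2 := by
        linear_combination (norm := module) (-1 : ℝ) • hd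
      have hmn : MinAt x i (-w3) :=
        minAt_combo (neg_nonneg.mpr hα) (neg_nonneg.mpr hβ.le) hm1 hm2 hd'
      apply noPA w3 hu3
      intro m
      have h1 := hm3 m
      have h2 := hmn m
      rw [inner_neg_left, inner_neg_left] at h2
      linarith
    · -- α > 0, β < 0 : w1 is a strict minimizer
      have hαne : α ≠ 0 := ne_of_gt hα
      have h2 : α • w1 = w3 - β • w2 := by
        linear_combination (norm := module) (-1 : ℝ) • hd
      have hw1eq : w1 = α⁻¹ • w3 + (-β * α⁻¹) • w2 := by
        have h3 : w1 = α⁻¹ • (w3 - β • w2) := by rw [← h2, inv_smul_smul₀ hαne]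
        rw [h3]; module
      exact wallcontra w1 hp1
        (strictc w3 w2 w1 α⁻¹ (-β * α⁻¹) (inv_pos.mpr hα)
          (by have := inv_pos.mpr hα; nlinarith) hm3 hm2
          (hpairgen w3 w2 hu3 hu2 hJ32 hm3 hm2) hw1eq)

lemma two_walls_per_index (hC : IsStrictConvexDomain C) (hCs : IsSmoothDomain C) (hn : 2 ≤ n)
    (hTint : (interior (⋂ i, x i +ᵥ C)).Nonempty)
    (hred : ∀ j : Fin n, (⋂ i, x i +ᵥ C) ⊂ ⋂ i ∈ {i : Fin n | i ≠ j}, x i +ᵥ C)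
    (hxinj : Function.Injective x) (i : Fin n) :
    ∃ a b : Plane, a ≠ b ∧ {w : Plane | IsWall x w ∧ MinAt x i w} = {a, b} := by
  obtain ⟨vi, hvi1, hvistrict, -⟩ := exists_good_direction hC hCs hn hTint hred i
  have hm₀ : ∃ m : Fin n, m ≠ i := by
    have h1 : 1 < Fintype.card (Fin n) := by simp; omega
    exact Fintype.exists_ne_of_one_lt_card h1 i
  obtain ⟨t₁, ht₁0, ht₁π, hwall₁, hmin₁⟩ :=
    rot_wall (x := x) hvi1 hvistrict hm₀ (Or.inl rfl : (1:ℝ) = 1 ∨ (1:ℝ) = -1)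
  obtain ⟨t₂, ht₂0, ht₂π, hwall₂, hmin₂⟩ :=
    rot_wall (x := x) hvi1 hvistrict hm₀ (Or.inr rfl : (-1:ℝ) = 1 ∨ (-1:ℝ) = -1)
  set a : Plane := rot (1 * t₁) vi with ha
  set b : Plane := rot (-1 * t₂) vi with hb
  have hab : a ≠ b := by
    intro h
    have hinj := rot_inj hvi1 (h : rot (1 * t₁) vi = rot (-1 * t₂) vi)
    rw [one_mul, neg_one_mul] at hinj
    rw [Real.cos_neg, Real.sin_neg] at hinj
    have ht12 : t₁ = t₂ :=
      Real.injOn_cos ⟨ht₁0, ht₁π.le⟩ ⟨ht₂0, ht₂π.le⟩ hinj.1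
    have hsin : Real.sin t₁ = 0 := by
      have := hinj.2
      rw [← ht12] at this
      linarith
    have ht₁eq : t₁ = 0 := by
      rcases Real.sin_eq_zero_iff_of_lt_of_lt (by linarith [Real.pi_pos] : -Real.pi < t₁)
        ht₁π |>.mp hsin with h0
      exact h0
    have havi : a = vi := by rw [ha, one_mul, ht₁eq, rot_zero]
    obtain ⟨m, hmi', hmeq⟩ := wall_partner hwall₁ hmin₁
    rw [havi] at hmeq
    exact absurd hmeq (ne_of_lt (hvistrict m hmi'))
  refine ⟨a, b, hab, ?_⟩
  ext w
  simp only [Set.mem_setOf_eq, Set.mem_insert_iff, Set.mem_singleton_iff]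
  constructor
  · rintro ⟨hwwall, hwmin⟩
    by_contra hcon
    push_neg at hcon
    exact three_walls_false hxinj hcon.1 hcon.2 hab hwwall.1 hwall₁.1 hwall₂.1
      hwmin hmin₁ hmin₂ (wall_partner hwwall hwmin) (wall_partner hwall₁ hmin₁)
      (wall_partner hwall₂ hmin₂)
  · rintro (rfl | rfl)
    · exact ⟨hwall₁, hmin₁⟩
    · exact ⟨hwall₂, hmin₂⟩

lemma wall_count (hC : IsStrictConvexDomain C) (hCs : IsSmoothDomain C) (hn : 2 ≤ n)
    (hTint : (interior (⋂ i, x i +ᵥ C)).Nonempty)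
    (hred : ∀ j : Fin n, (⋂ i, x i +ᵥ C) ⊂ ⋂ i ∈ {i : Fin n | i ≠ j}, x i +ᵥ C)
    (hxinj : Function.Injective x) :
    {w : Plane | IsWall x w}.encard = (n : ℕ∞) := by
  classical
  have h2w := fun i => two_walls_per_index hC hCs hn hTint hred hxinj i
  choose a b hab hset using h2w
  set A : Finset (Plane × Fin n) :=
    Finset.univ.biUnion (fun i => {(a i, i), (b i, i)}) with hA
  have hcardA : A.card = 2 * n := by
    rw [hA, Finset.card_biUnion]
    · have hpair : ∀ i : Fin n, ({(a i, i), (b i, i)} : Finset (Plane × Fin n)).card = 2 :=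
        fun i => Finset.card_pair (fun h => hab i (congrArg Prod.fst h))
      rw [Finset.sum_congr rfl (fun i _ => hpair i)]
      simp [Finset.card_univ, mul_comm]
    · intro i _ j _ hij
      simp only [Finset.disjoint_left, Finset.mem_insert, Finset.mem_singleton]
      rintro ⟨v, m⟩ (h1 | h1) (h2 | h2) <;>
        exact hij ((congrArg Prod.snd h1).symm.trans (congrArg Prod.snd h2) : i = j)
  set W : Finset Plane := A.image Prod.fst with hW
  have hAmem2 : ∀ (i : Fin n) (v : Plane), v = a i ∨ v = b i → (v, i) ∈ A := by
    intro i v hv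
    rw [hA, Finset.mem_biUnion]
    refine ⟨i, Finset.mem_univ i, ?_⟩
    simp only [Finset.mem_insert, Finset.mem_singleton]
    rcases hv with h | h
    · left; rw [h]
    · right; rw [h]
  have hWiff : ∀ w : Plane, w ∈ W ↔ IsWall x w := by
    intro w
    constructor
    · intro hw
      rw [hW, Finset.mem_image] at hw
      obtain ⟨⟨v, m⟩, hvm, hfst⟩ := hw
      rw [hA, Finset.mem_biUnion] at hvm
      obtain ⟨i, -, hi⟩ := hvm
      simp only [Finset.mem_insert, Finset.mem_singleton] at hi
      have hwmem : w ∈ ({a i, b i} : Set Plane) := by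
        rcases hi with h | h
        · left; rw [← hfst, h]
        · right; rw [← hfst, h]; rfl
      rw [← hset i] at hwmem
      exact hwmem.1
    · intro hw
      obtain ⟨i, j, hij, hmi, hmj⟩ := hw.2
      have hwmem : w ∈ ({a i, b i} : Set Plane) := by
        rw [← hset i]; exact ⟨hw, hmi⟩
      rw [hW, Finset.mem_image]
      rcases hwmem with h | h
      · exact ⟨(w, i), hAmem2 i w (Or.inl h), rfl⟩
      · exact ⟨(w, i), hAmem2 i w (Or.inr h), rfl⟩
  -- fiber cardinality
  have hfiber : ∀ w ∈ W, (A.filter (fun p => p.1 = w)).card = 2 := by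
    intro w hwW
    have hwall : IsWall x w := (hWiff w).mp hwW
    obtain ⟨i, j, hij, hminset⟩ := wall_two_min hC hCs hn hTint hred hxinj hwall
    have hfilter : A.filter (fun p => p.1 = w) =
        ({(w, i), (w, j)} : Finset (Plane × Fin n)) := by
      ext ⟨v, m⟩
      simp only [Finset.mem_filter, Finset.mem_insert, Finset.mem_singleton]
      constructor
      · rintro ⟨hvm, rfl⟩
        rw [hA, Finset.mem_biUnion] at hvm
        obtain ⟨i', -, hi'⟩ := hvm
        simp only [Finset.mem_insert, Finset.mem_singleton, Prod.mk.injEq] at hi'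
        have hm' : m = i' := by rcases hi' with ⟨-, h⟩ | ⟨-, h⟩ <;> exact h
        subst hm'
        have hvmem : v ∈ ({a m, b m} : Set Plane) := by
          rcases hi' with ⟨h, -⟩ | ⟨h, -⟩
          · left; exact h
          · right; exact h
        rw [← hset m] at hvmem
        have : m ∈ ({m | MinAt x m v} : Set (Fin n)) := hvmem.2
        rw [hminset] at this
        rcases this with h | h
        · left; rw [h]
        · right; rw [h]
      · intro hvm
        have hmm : v = w ∧ (m = i ∨ m = j) := by
          rcases hvm with h | h
          · exact ⟨congrArg Prod.fst h, Or.inl (congrArg Prod.snd h)⟩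
          · exact ⟨congrArg Prod.fst h, Or.inr (congrArg Prod.snd h)⟩
        obtain ⟨rfl, hm⟩ := hmm
        refine ⟨?_, rfl⟩
        have hmin : MinAt x m v := by
          have : m ∈ ({i, j} : Set (Fin n)) := by
            rcases hm with h | h
            · left; exact h
            · right; exact h
          rw [← hminset] at this
          exact this
        have hvmem : v ∈ ({w | IsWall x w ∧ MinAt x m w} : Set Plane) := ⟨hwall, hmin⟩
        rw [hset m] at hvmem
        rcases hvmem with h | h
        · exact hAmem2 m v (Or.inl h)
        · exact hAmem2 m v (Or.inr h)
    rw [hfilter]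
    rw [Finset.card_insert_of_notMem, Finset.card_singleton]
    simp only [Finset.mem_singleton, Prod.mk.injEq]
    rintro ⟨-, h⟩
    exact hij h
  -- double counting
  have hsum : A.card = ∑ w ∈ W, (A.filter (fun p => p.1 = w)).card := by
    apply Finset.card_eq_sum_card_fiberwise
    intro p hp
    rw [hW, Finset.mem_coe, Finset.mem_image]
    exact ⟨p, hp, rfl⟩
  have hWcard : W.card = n := by
    rw [hcardA, Finset.sum_congr rfl hfiber, Finset.sum_const, smul_eq_mul] at hsum
    omega
  have hWset : {w : Plane | IsWall x w} = ↑W := by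
    ext w
    simp only [Set.mem_setOf_eq, Finset.mem_coe]
    exact (hWiff w).symm
  rw [hWset, Set.encard_coe_eq_coe_finsetCard, hWcard]

lemma singular_count (hC : IsStrictConvexDomain C) (hCs : IsSmoothDomain C) (hn : 2 ≤ n)
    (hTint : (interior (⋂ i, x i +ᵥ C)).Nonempty)
    (hred : ∀ j : Fin n, (⋂ i, x i +ᵥ C) ⊂ ⋂ i ∈ {i : Fin n | i ≠ j}, x i +ᵥ C) :
    {p : Plane | IsSingularPt (⋂ i, x i +ᵥ C) p}.encard = (n : ℕ∞) := by
  classical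
  have hxinj := x_inj hred
  set F : Plane → Plane := fun w =>
    if h : IsWall x w then (wall_to_singular hC hCs hn hTint hxinj h).choose else 0 with hF
  have hFspec : ∀ w, (h : IsWall x w) → IsSingularPt (⋂ i, x i +ᵥ C) (F w) ∧
      IsOuterNormalAt (⋂ i, x i +ᵥ C) (F w) w := by
    intro w h
    have : F w = (wall_to_singular hC hCs hn hTint hxinj h).choose := by
      rw [hF]; simp only [dif_pos h]
    rw [this]
    exact (wall_to_singular hC hCs hn hTint hxinj h).choose_spec
  have himage : {p : Plane | IsSingularPt (⋂ i, x i +ᵥ C) p} = F '' {w | IsWall x w} := by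
    ext p
    simp only [Set.mem_setOf_eq, Set.mem_image]
    constructor
    · intro hsing
      obtain ⟨w, hwall, hnorm⟩ := singular_to_wall hC hCs hn hTint hxinj hsing
      refine ⟨w, hwall, ?_⟩
      obtain ⟨hFsing, hFnorm⟩ := hFspec w hwall
      have hw0 : w ≠ 0 := unit_ne_zero hnorm.1
      exact point_unique hC hn (TT_frontier_sub hC hFsing.1) (TT_frontier_sub hC hsing.1)
        hw0 hFnorm.2 hnorm.2
    · rintro ⟨w, hwall, rfl⟩
      exact (hFspec w hwall).1
  have hinjOn : Set.InjOn F {w | IsWall x w} := by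
    intro w hw w' hw' heq
    obtain ⟨hsing, hnw⟩ := hFspec w hw
    obtain ⟨-, hnw'⟩ := hFspec w' hw'
    rw [← heq] at hnw'
    exact wall_injective hC hCs hn hTint hred hxinj hw hw' hsing hnw hnw'
  rw [himage, Set.InjOn.encard_image hinjOn]
  exact wall_count hC hCs hn hTint hred hxinj

end Main
end Stmt12

theorem stmt12 (C : Set Plane) (hC : IsStrictConvexDomain C) (hCs : IsSmoothDomain C)
    (n : ℕ) (hn : 2 ≤ n) (x : Fin n → Plane)
    (T : Fin n → Set Plane) (hT : ∀ i, T i = x i +ᵥ C)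
    (hint : (interior (⋂ i, T i)).Nonempty)
    (hred : ∀ j : Fin n, (⋂ i, T i) ⊂ ⋂ i ∈ {i : Fin n | i ≠ j}, T i) :
    {p : Plane | IsSingularPt (⋂ i, T i) p}.encard = (n : ℕ∞) := by
  have hTT : (⋂ i, T i) = ⋂ i, x i +ᵥ C := by simp_rw [hT]
  have hred' : ∀ j : Fin n, (⋂ i, x i +ᵥ C) ⊂ ⋂ i ∈ {i : Fin n | i ≠ j}, x i +ᵥ C := by
    intro j
    have := hred j
    rw [hTT] at this
    convert this using 2
    simp_rw [hT]
  rw [hTT] at hint ⊢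
  exact Stmt12.singular_count hC hCs hn hint hred'
end

section
/- Let C be a smooth strictly convex domain in ℝ² and let T1 = C and T2 = C + x (x ≠ 0) be two translates whose intersection is proper. Then the Gauss image of the set of boundary points of T1 lying outside T2 (i.e., bd(T1) \ T2) contains a closed half-circle of unit normal directions; in particular it contains both unit vectors perpendicular to x. -/
open Pointwise
open scoped RealInnerProductSpace

theorem stmt13 (C : Set Plane) (hC : IsStrictConvexDomain C) (hCs : IsSmoothDomain C)
    (x : Plane) (hx : x ≠ 0)
    (T1 T2 : Set Plane) (hT1 : T1 = C) (hT2 : T2 = x +ᵥ C)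
    (hint : (interior (T1 ∩ T2)).Nonempty)
    (hred1 : T1 ∩ T2 ⊂ T1) (hred2 : T1 ∩ T2 ⊂ T2) :
    ∀ u : Plane, ‖u‖ = 1 → (inner ℝ u x : ℝ) ≤ 0 →
      ∃ p ∈ frontier T1 \ T2, IsOuterNormalAt T1 p u := by
  subst hT1 hT2
  obtain ⟨⟨hcomp, hconv, hintC⟩, hstrict⟩ := hC
  intro u hu hux
  -- key lemma: interior points do not attain the max of ⟪u,·⟫
  have key : ∀ z ∈ interior T1, ∀ p, (∀ y ∈ T1, (inner ℝ u y : ℝ) ≤ inner ℝ u p) →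
      (inner ℝ u z : ℝ) < inner ℝ u p := by
    intro z hz p hp
    obtain ⟨ε, hε, hball⟩ := Metric.isOpen_iff.1 isOpen_interior z hz
    have hmem : z + (ε / 2) • u ∈ T1 := by
      apply interior_subset
      apply hball
      simp only [Metric.mem_ball, dist_eq_norm]
      have : ‖z + (ε / 2) • u - z‖ = ε / 2 := by
        simp [norm_smul, hu, abs_of_pos hε]
      rw [this]; linarith
    have := hp _ hmem
    rw [inner_add_right, real_inner_smul_right, real_inner_self_eq_norm_sq, hu] at this
    linarith
  -- take a maximizer of ⟪u,·⟫ on T1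
  have hcont : Continuous fun y : Plane => (inner ℝ u y : ℝ) :=
    continuous_const.inner continuous_id
  obtain ⟨p, hpC, hpmax⟩ := hcomp.exists_isMaxOn
    (hintC.mono interior_subset) hcont.continuousOn
  have hpmax : ∀ y ∈ T1, (inner ℝ u y : ℝ) ≤ inner ℝ u p := fun y hy => hpmax hy
  have hfront : ∀ q ∈ T1, (∀ y ∈ T1, (inner ℝ u y : ℝ) ≤ inner ℝ u q) → q ∈ frontier T1 := by
    intro q hq hqmax
    rw [frontier_eq_closure_inter_closure, hcomp.isClosed.closure_eq]
    refine ⟨hq, ?_⟩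
    rw [closure_compl]
    intro hqint
    exact absurd (key q (by simpa using hqint) q hqmax) (lt_irrefl _)
  have hpf : p ∈ frontier T1 := hfront p hpC hpmax
  refine ⟨p, ⟨hpf, ?_⟩, hu, hpmax⟩
  -- p ∉ x +ᵥ T1
  intro hpT2
  obtain ⟨q, hqC, hq⟩ := hpT2
  have hq' : q = p - x := by
    have h2 : x + q = p := hq
    rw [← h2]; abel
  subst hq'
  have h1 : (inner ℝ u (p - x) : ℝ) ≤ inner ℝ u p := hpmax _ hqC
  rw [inner_sub_right] at h1
  have hux0 : (inner ℝ u x : ℝ) = 0 := le_antisymm hux (by linarith)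
  have hqmax : ∀ y ∈ T1, (inner ℝ u y : ℝ) ≤ inner ℝ u (p - x) := by
    intro y hy
    rw [inner_sub_right, hux0]
    simpa using hpmax y hy
  have hqf : (p - x) ∈ frontier T1 := hfront _ hqC hqmax
  have hne : p - x ≠ p := by
    intro h
    apply hx
    have := congrArg (fun z => p - z) h
    simpa using this
  set m : Plane := (1/2 : ℝ) • (p - x) + (1/2 : ℝ) • p with hm
  have hmid : m ∈ interior T1 := by
    apply hstrict _ hqf _ hpf hne
    exact ⟨1/2, 1/2, by norm_num, by norm_num, by norm_num, rfl⟩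
  have hlt := key _ hmid p hpmax
  have : (inner ℝ u m : ℝ) = inner ℝ u p := by
    rw [hm, inner_add_right, real_inner_smul_right, real_inner_smul_right,
      inner_sub_right, hux0]
    ring
  linarith
end

section
/- Let H1 and H2 be homothets of a strictly convex domain C in ℝ² whose intersection is proper, and let p be one of the two points in bd(H1) ∩ bd(H2). Then p is a singular point of H1 ∩ H2: the convex body H1 ∩ H2 has at least two distinct supporting lines at p. -/
open Pointwise
open scoped RealInnerProductSpace

/-- A point of `interior K` cannot maximize `⟪u, ·⟫` over `K` when `‖u‖ = 1`. -/
lemma not_max_of_interior {K : Set Plane} {u z : Plane} (hu : ‖u‖ = 1)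
    (hz : z ∈ interior K) (hmax : ∀ c ∈ K, (inner ℝ u c : ℝ) ≤ inner ℝ u z) : False := by
  obtain ⟨ε, hε, hball⟩ := Metric.isOpen_iff.1 isOpen_interior z hz
  have hmem : z + (ε / 2) • u ∈ K := by
    apply interior_subset; apply hball
    rw [Metric.mem_ball, dist_eq_norm]
    have : z + (ε / 2) • u - z = (ε / 2) • u := by abel
    rw [this, norm_smul, hu, mul_one, Real.norm_eq_abs, abs_of_pos (by linarith : (0:ℝ) < ε / 2)]
    linarith
  have := hmax _ hmem
  rw [inner_add_right, real_inner_smul_right, real_inner_self_eq_norm_sq, hu] at this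
  nlinarith

/-- Supporting hyperplane at a frontier point of a closed convex set with nonempty interior. -/
lemma exists_outerNormal {K : Set Plane} (hconv : Convex ℝ K) (hne : (interior K).Nonempty)
    {p : Plane} (hp : p ∈ frontier K) : ∃ u, IsOuterNormalAt K p u := by
  have hpi : p ∉ interior K := hp.2
  obtain ⟨f, hf⟩ := geometric_hahn_banach_open_point hconv.interior isOpen_interior hpi
  obtain ⟨a, ha⟩ := hne
  set u' := (InnerProductSpace.toDual ℝ Plane).symm f with hu'
  have hinner : ∀ y, (inner ℝ u' y : ℝ) = f y := fun y => InnerProductSpace.toDual_symm_apply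
  have hne0 : u' ≠ 0 := by
    intro h0
    have h1 : f a < f p := hf a ha
    have h2 : f a = 0 := by rw [← hinner a, h0]; simp
    have h3 : f p = 0 := by rw [← hinner p, h0]; simp
    linarith
  have hnorm : (0:ℝ) < ‖u'‖ := norm_pos_iff.2 hne0
  refine ⟨‖u'‖⁻¹ • u', ?_, ?_⟩
  · rw [norm_smul, norm_inv, norm_norm, inv_mul_cancel₀ hnorm.ne']
  · intro y hy
    have hle : f y ≤ f p := by
      have key : ∀ t : ℝ, t ∈ Set.Ioo (0:ℝ) 1 → t * f a + (1 - t) * f y ≤ f p := by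
        intro t ht
        have hmem : t • a + (1 - t) • y ∈ interior K :=
          hconv.combo_interior_self_mem_interior ha hy ht.1 (by linarith [ht.2]) (by ring)
        have := hf _ hmem
        simpa [map_add, map_smul, smul_eq_mul] using this.le
      have htend : Filter.Tendsto (fun t : ℝ => t * f a + (1 - t) * f y)
          (nhdsWithin 0 (Set.Ioi (0:ℝ))) (nhds (f y)) := by
        have h0 : Filter.Tendsto (fun t : ℝ => t * f a + (1 - t) * f y) (nhds 0)
            (nhds (0 * f a + (1 - 0) * f y)) := by
          apply Filter.Tendsto.add
          · exact (continuous_id.mul continuous_const).tendsto 0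
          · exact ((continuous_const.sub continuous_id).mul continuous_const).tendsto 0
        have h1 : (0:ℝ) * f a + (1 - 0) * f y = f y := by ring
        rw [h1] at h0
        exact h0.mono_left nhdsWithin_le_nhds
      refine le_of_tendsto htend ?_
      filter_upwards [Ioo_mem_nhdsGT_of_mem (Set.mem_Ico.2 ⟨le_refl (0:ℝ), one_pos⟩)]
        with t ht using key t ht
    rw [real_inner_smul_left, real_inner_smul_left, hinner, hinner]
    exact mul_le_mul_of_nonneg_left hle (inv_nonneg.2 hnorm.le)

lemma mem_homothet_iff {C : Set Plane} {x q : Plane} {l : ℝ} (hl : 0 < l) :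
    q ∈ x +ᵥ l • C ↔ l⁻¹ • (q - x) ∈ C := by
  rw [Set.mem_vadd_set_iff_neg_vadd_mem, Set.mem_smul_set_iff_inv_smul_mem₀ hl.ne']
  congr! 2
  simp [vadd_eq_add, sub_eq_neg_add]

/-- If two homothets share a support point in the same direction and `l1 ≤ l2`,
the smaller is contained in the bigger. -/
lemma homothet_subset {C : Set Plane} (hconv : Convex ℝ C) {x1 x2 s : Plane} {l1 l2 : ℝ}
    (hl1 : 0 < l1) (hl2 : 0 < l2) (hle : l1 ≤ l2) (hs : s ∈ C)
    (heq : x1 + l1 • s = x2 + l2 • s) : x1 +ᵥ l1 • C ⊆ x2 +ᵥ l2 • C := by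
  intro q hq
  rw [mem_homothet_iff hl1] at hq
  rw [mem_homothet_iff hl2]
  have hc : l2⁻¹ • (q - x2) = (1 - l1 / l2) • s + (l1 / l2) • (l1⁻¹ • (q - x1)) := by
    have hx : x2 = x1 + l1 • s - l2 • s := by
      rw [eq_sub_iff_add_eq]; exact heq.symm
    rw [hx]
    match_scalars <;> (field_simp; try ring)
  rw [hc]
  exact hconv hs hq (by rw [sub_nonneg, div_le_one hl2]; exact hle) (by positivity)
    (by ring)

theorem stmt15 (C H1 H2 : Set Plane) (x1 x2 : Plane) (l1 l2 : ℝ)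
    (hC : IsStrictConvexDomain C) (hl1 : 0 < l1) (hl2 : 0 < l2)
    (hH1 : H1 = x1 +ᵥ l1 • C) (hH2 : H2 = x2 +ᵥ l2 • C)
    (hint : (interior (H1 ∩ H2)).Nonempty)
    (hred1 : H1 ∩ H2 ⊂ H1) (hred2 : H1 ∩ H2 ⊂ H2)
    (p : Plane) (hp : p ∈ frontier H1 ∩ frontier H2) :
    IsSingularPt (H1 ∩ H2) p := by
  obtain ⟨⟨hCcomp, hCconv, hCint⟩, hCstrict⟩ := hC
  have hCclosed : IsClosed C := hCcomp.isClosed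
  -- basic facts about the homothets
  have hH1conv : Convex ℝ H1 := hH1 ▸ (hCconv.smul l1).vadd x1
  have hH2conv : Convex ℝ H2 := hH2 ▸ (hCconv.smul l2).vadd x2
  have himg : ∀ (x : Plane) (l : ℝ), x +ᵥ l • C = (fun c => x + l • c) '' C := by
    intro x l; ext q
    simp only [Set.mem_image]
    rw [Set.mem_vadd_set]
    constructor
    · rintro ⟨b, hb, rfl⟩
      obtain ⟨c, hc, rfl⟩ := hb
      exact ⟨c, hc, rfl⟩
    · rintro ⟨c, hc, rfl⟩
      exact ⟨l • c, ⟨c, hc, rfl⟩, rfl⟩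
  have hH1cl : IsClosed H1 := by
    rw [hH1, himg]
    exact (hCcomp.image (continuous_const.add (continuous_const_smul _))).isClosed
  have hH2cl : IsClosed H2 := by
    rw [hH2, himg]
    exact (hCcomp.image (continuous_const.add (continuous_const_smul _))).isClosed
  have hpH1 : p ∈ H1 := hH1cl.closure_eq ▸ frontier_subset_closure hp.1
  have hpH2 : p ∈ H2 := hH2cl.closure_eq ▸ frontier_subset_closure hp.2
  have hpK : p ∈ H1 ∩ H2 := ⟨hpH1, hpH2⟩
  have hKconv : Convex ℝ (H1 ∩ H2) := hH1conv.inter hH2conv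
  -- p is on the frontier of the intersection
  have hpfr : p ∈ frontier (H1 ∩ H2) := by
    constructor
    · exact subset_closure hpK
    · intro hpi
      exact (hp.1).2 (interior_mono Set.inter_subset_left hpi)
  -- frontiers of H1, H2 give normals
  have hint1 : (interior H1).Nonempty := hint.mono (interior_mono Set.inter_subset_left)
  have hint2 : (interior H2).Nonempty := hint.mono (interior_mono Set.inter_subset_right)
  obtain ⟨u, hu⟩ := exists_outerNormal hH1conv hint1 hp.1
  obtain ⟨v, hv⟩ := exists_outerNormal hH2conv hint2 hp.2
  refine ⟨hpfr, u, v, ?_, ⟨hu.1, fun y hy => hu.2 y hy.1⟩, ⟨hv.1, fun y hy => hv.2 y hy.2⟩⟩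
  -- u ≠ v: otherwise the homothets share a support point, hence one contains the other
  intro huv
  subst huv
  -- support points on C
  obtain ⟨s1, hs1C, hrec1⟩ : ∃ s ∈ C, p = x1 + l1 • s := by
    refine ⟨l1⁻¹ • (p - x1), (mem_homothet_iff hl1).1 (hH1 ▸ hpH1), ?_⟩
    rw [smul_smul, mul_inv_cancel₀ hl1.ne', one_smul]; abel
  obtain ⟨s2, hs2C, hrec2⟩ : ∃ s ∈ C, p = x2 + l2 • s := by
    refine ⟨l2⁻¹ • (p - x2), (mem_homothet_iff hl2).1 (hH2 ▸ hpH2), ?_⟩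
    rw [smul_smul, mul_inv_cancel₀ hl2.ne', one_smul]; abel
  -- maximality over C
  have hmax : ∀ (x : Plane) (l : ℝ) (s : Plane), 0 < l → p = x + l • s →
      (∀ y ∈ x +ᵥ l • C, (inner ℝ u y : ℝ) ≤ inner ℝ u p) →
      ∀ c ∈ C, (inner ℝ u c : ℝ) ≤ inner ℝ u s := by
    intro x l s hl hrec hn c hc
    have hmem : x + l • c ∈ x +ᵥ l • C := by
      rw [mem_homothet_iff hl]
      have : l⁻¹ • (x + l • c - x) = c := by
        rw [show x + l • c - x = l • c by abel, smul_smul, inv_mul_cancel₀ hl.ne', one_smul]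
      rw [this]; exact hc
    have h1 := hn _ hmem
    rw [hrec, inner_add_right, inner_add_right, real_inner_smul_right,
      real_inner_smul_right] at h1
    exact le_of_mul_le_mul_left (by linarith) hl
  have hmax1 : ∀ c ∈ C, (inner ℝ u c : ℝ) ≤ inner ℝ u s1 :=
    hmax x1 l1 s1 hl1 hrec1 (fun y hy => hu.2 y (hH1 ▸ hy))
  have hmax2 : ∀ c ∈ C, (inner ℝ u c : ℝ) ≤ inner ℝ u s2 :=
    hmax x2 l2 s2 hl2 hrec2 (fun y hy => hv.2 y (hH2 ▸ hy))
  -- s1 and s2 are on the frontier of C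
  have hfr : ∀ s : Plane, s ∈ C → (∀ c ∈ C, (inner ℝ u c : ℝ) ≤ inner ℝ u s) → s ∈ frontier C := by
    intro s hsC hm
    rw [hCclosed.frontier_eq]
    exact ⟨hsC, fun hsi => not_max_of_interior hu.1 hsi hm⟩
  have hs1fr := hfr s1 hs1C hmax1
  have hs2fr := hfr s2 hs2C hmax2
  -- s1 = s2 by strict convexity
  have hs12 : s1 = s2 := by
    by_contra hne
    have hmid : (1/2 : ℝ) • s1 + (1/2 : ℝ) • s2 ∈ openSegment ℝ s1 s2 :=
      ⟨1/2, 1/2, by norm_num, by norm_num, by norm_num, rfl⟩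
    have hin := hCstrict s1 hs1fr s2 hs2fr hne hmid
    have heq : (inner ℝ u s1 : ℝ) = inner ℝ u s2 := le_antisymm (hmax2 s1 hs1C) (hmax1 s2 hs2C)
    apply not_max_of_interior hu.1 hin
    intro c hc
    rw [inner_add_right, real_inner_smul_right, real_inner_smul_right, ← heq]
    have := hmax1 c hc
    linarith
  -- now one homothet contains the other: contradiction with properness
  rcases le_total l1 l2 with hle | hle
  · have hsub : H1 ⊆ H2 := by
      rw [hH1, hH2]
      exact homothet_subset hCconv hl1 hl2 hle hs1C (by rw [← hrec1, hs12, ← hrec2])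
    exact hred1.ne (Set.inter_eq_left.2 hsub)
  · have hsub : H2 ⊆ H1 := by
      rw [hH1, hH2]
      exact homothet_subset hCconv hl2 hl1 hle hs2C (by rw [← hrec2, ← hs12, ← hrec1])
    exact hred2.ne (Set.inter_eq_right.2 hsub)
end
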